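/- arXiv:math/9809049 — 8 statements merged into one kernel-verified Lean document; each statement's English description precedes it below -/
import Mathlib

section
/- Let K be a field of characteristic 0 and u, v ∈ K[t] with deg u ≤ deg v. If for some μ ∈ K* and k ≥ 2 the polynomial pair (u + μv^k, v) is followed by an elementary transformation (u + μv^k, v) ↦ (u + μv^k + λv^m, v) that strictly decreases the maximum of the degrees, then μv^k = −λv^m (so the second transformation is the inverse of the first). -/
open Polynomial

private lemma deg_C_mul_pow {K : Type*} [Field K] {a : K} (ha : a ≠ 0) {v : K[X]}
    (hv : v ≠ 0) (k : ℕ) :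
    (C a * v ^ k).degree = ((k * v.natDegree : ℕ) : WithBot ℕ) := by
  rw [degree_C_mul ha, degree_pow, degree_eq_natDegree hv]
  simp [Nat.cast_mul]

/-- Peak reduction, case (1)(b): if `deg u ≤ deg v` and the elementary transformation
`(u + μ v^k, v) ↦ (u + μ v^k + λ v^m, v)` strictly decreases the maximum of the degrees,
then `μ v^k = -(λ v^m)`, i.e. the second transformation is the inverse of the first. -/
theorem peak_reduction_case_1b (K : Type*) [Field K] [CharZero K]
    (u v : K[X]) (hdeg : u.degree ≤ v.degree)
    (μ lam : K) (hμ : μ ≠ 0) (hlam : lam ≠ 0) (k m : ℕ) (hk : 2 ≤ k) (hm : 2 ≤ m)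
    (hdec : max (u + C μ * v ^ k + C lam * v ^ m).degree v.degree
        < max (u + C μ * v ^ k).degree v.degree) :
    C μ * v ^ k = -(C lam * v ^ m) := by
  -- dispose of the case v = 0
  rcases eq_or_ne v 0 with rfl | hv
  · rw [zero_pow (by omega : k ≠ 0), zero_pow (by omega : m ≠ 0)]; ring
  set n := v.natDegree with hn
  have hdv : v.degree = (n : WithBot ℕ) := degree_eq_natDegree hv
  -- the degree of v is positive
  have hn1 : 1 ≤ n := by
    by_contra h
    have hn0 : n = 0 := by omega
    have h1 : (u + C μ * v ^ k + C lam * v ^ m).degree ≤ 0 := by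
      refine (degree_add_le _ _).trans (max_le ((degree_add_le _ _).trans (max_le ?_ ?_)) ?_)
      · exact hdeg.trans (by simp [hdv, hn0])
      · rw [deg_C_mul_pow hμ hv, ← hn, hn0]; simp
      · rw [deg_C_mul_pow hlam hv, ← hn, hn0]; simp
    have h2 : (u + C μ * v ^ k).degree ≤ 0 := by
      refine (degree_add_le _ _).trans (max_le (hdeg.trans (by simp [hdv, hn0])) ?_)
      rw [deg_C_mul_pow hμ hv, ← hn, hn0]; simp
    rw [hdv, hn0] at hdec
    simp only [Nat.cast_zero] at hdec
    rw [max_eq_right h1, max_eq_right h2] at hdec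
    exact lt_irrefl _ hdec
  have hult : ∀ j : ℕ, 2 ≤ j → u.degree < ((j * n : ℕ) : WithBot ℕ) := by
    intro j hj
    refine lt_of_le_of_lt (hdeg.trans_eq hdv) ?_
    exact_mod_cast (by nlinarith : n < j * n)
  -- degree of u + μ v^k is k*n
  have hduk : (u + C μ * v ^ k).degree = ((k * n : ℕ) : WithBot ℕ) := by
    rw [degree_add_eq_right_of_degree_lt, deg_C_mul_pow hμ hv]
    rw [deg_C_mul_pow hμ hv]; exact hult k hk
  have hmax : max (u + C μ * v ^ k).degree v.degree = ((k * n : ℕ) : WithBot ℕ) := by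
    rw [hduk, hdv, max_eq_left]
    exact_mod_cast Nat.le_mul_of_pos_left n (by omega)
  rw [hmax] at hdec
  have hlt : (u + C μ * v ^ k + C lam * v ^ m).degree < ((k * n : ℕ) : WithBot ℕ) :=
    (le_max_left _ _).trans_lt hdec
  -- show k = m
  have hkm : k = m := by
    by_contra hne
    rcases Nat.lt_or_ge k m with h | h
    · have : (u + C μ * v ^ k + C lam * v ^ m).degree = ((m * n : ℕ) : WithBot ℕ) := by
        rw [degree_add_eq_right_of_degree_lt, deg_C_mul_pow hlam hv]
        rw [deg_C_mul_pow hlam hv, hduk]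
        exact_mod_cast (by nlinarith : k * n < m * n)
      rw [this] at hlt
      exact absurd (Nat.cast_lt.mp hlt) (by nlinarith)
    · have hkm' : m < k := by omega
      have : (u + C μ * v ^ k + C lam * v ^ m).degree = ((k * n : ℕ) : WithBot ℕ) := by
        rw [degree_add_eq_left_of_degree_lt, hduk]
        rw [deg_C_mul_pow hlam hv, hduk]
        exact_mod_cast (by nlinarith : m * n < k * n)
      rw [this] at hlt
      exact lt_irrefl _ hlt
  subst hkm
  -- show μ + lam = 0
  have hsum : u + C μ * v ^ k + C lam * v ^ k = u + C (μ + lam) * v ^ k := by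
    rw [C_add]; ring
  rw [hsum] at hlt
  have hμl : μ + lam = 0 := by
    by_contra h
    have : (u + C (μ + lam) * v ^ k).degree = ((k * n : ℕ) : WithBot ℕ) := by
      rw [degree_add_eq_right_of_degree_lt, deg_C_mul_pow h hv]
      rw [deg_C_mul_pow h hv]; exact hult k hk
    rw [this] at hlt
    exact lt_irrefl _ hlt
  have : lam = -μ := by linear_combination hμl
  subst this
  rw [map_neg]; ring
end

section
/- Let K be a field of characteristic 0 and let u, v ∈ K[t] with m = deg u, n = deg v, where m does not divide n and n does not divide m. Then no single elementary transformation applied to (u, v) strictly decreases max(deg u, deg v). -/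
open Polynomial

/-- Elementary transformations on `K[t] × K[t]`:
(ET1) `(u,v) ↦ (u + μ v^k, v)` with `μ ∈ K*`, `k ≥ 2`;
(ET2) `(u,v) ↦ (u, v + μ u^k)` with `μ ∈ K*`, `k ≥ 2`;
(ET3) invertible linear transformations `(u,v) ↦ (a₁u + a₂v, b₁u + b₂v)`. -/
def IsElemTrans (K : Type*) [Field K] (p q : K[X] × K[X]) : Prop :=
  (∃ μ : K, μ ≠ 0 ∧ ∃ k : ℕ, 2 ≤ k ∧ q = (p.1 + C μ * p.2 ^ k, p.2)) ∨
  (∃ μ : K, μ ≠ 0 ∧ ∃ k : ℕ, 2 ≤ k ∧ q = (p.1, p.2 + C μ * p.1 ^ k)) ∨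
  (∃ a₁ a₂ b₁ b₂ : K, a₁ * b₂ - a₂ * b₁ ≠ 0 ∧
      q = (C a₁ * p.1 + C a₂ * p.2, C b₁ * p.1 + C b₂ * p.2))

/-- Adding a polynomial of different degree cannot decrease degree. -/
lemma aux_deg_add_ge {K : Type*} [Field K] (p q : K[X]) (h : q.degree ≠ p.degree) :
    p.degree ≤ (p + q).degree := by
  rcases lt_or_gt_of_ne h with h' | h'
  · rw [degree_add_eq_left_of_degree_lt h']
  · rw [degree_add_eq_right_of_degree_lt h']
    exact le_of_lt h'

/-- Final step of Proposition 3.1: if `m = deg u` and `n = deg v` are such that neither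
divides the other, then no single elementary transformation applied to `(u, v)` strictly
decreases `max (deg u) (deg v)`. -/
theorem no_single_reduction (K : Type*) [Field K] [CharZero K] (u v : K[X]) (m n : ℕ)
    (hm : u.natDegree = m) (hn : v.natDegree = n) (hmn : ¬ m ∣ n) (hnm : ¬ n ∣ m) :
    ∀ w : K[X] × K[X], IsElemTrans K (u, v) w →
      ¬ max w.1.degree w.2.degree < max u.degree v.degree := by
  have hm0 : m ≠ 0 := fun h => hnm (h ▸ dvd_zero n)
  have hn0 : n ≠ 0 := fun h => hmn (h ▸ dvd_zero m)
  have hu0 : u ≠ 0 := fun h => hm0 (by simp [← hm, h])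
  have hv0 : v ≠ 0 := fun h => hn0 (by simp [← hn, h])
  have du : u.degree = (m : ℕ) := by rw [degree_eq_natDegree hu0, hm]
  have dv : v.degree = (n : ℕ) := by rw [degree_eq_natDegree hv0, hn]
  have hmne : m ≠ n := fun h => hmn (h ▸ dvd_refl m)
  intro w hw
  rw [not_lt]
  rcases hw with ⟨μ, hμ, k, hk, hq⟩ | ⟨μ, hμ, k, hk, hq⟩ | ⟨a₁, a₂, b₁, b₂, hdet, hq⟩
  · -- ET1
    subst hq
    simp only
    have dpk : (C μ * v ^ k).degree = ((k * n : ℕ) : WithBot ℕ) := by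
      rw [degree_C_mul hμ, degree_pow, dv]
      exact_mod_cast (by push_cast; ring :
        (k • (n:ℕ) : WithBot ℕ) = ((k*n:ℕ) : WithBot ℕ))
    have hne : (C μ * v ^ k).degree ≠ u.degree := by
      rw [dpk, du]
      intro h
      exact hnm ⟨k, by rw [mul_comm]; exact_mod_cast h.symm⟩
    have h1 : u.degree ≤ (u + C μ * v ^ k).degree := aux_deg_add_ge _ _ hne
    exact max_le_max h1 le_rfl
  · -- ET2
    subst hq
    simp only
    have dpk : (C μ * u ^ k).degree = ((k * m : ℕ) : WithBot ℕ) := by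
      rw [degree_C_mul hμ, degree_pow, du]
      exact_mod_cast (by push_cast; ring :
        (k • (m:ℕ) : WithBot ℕ) = ((k*m:ℕ) : WithBot ℕ))
    have hne : (C μ * u ^ k).degree ≠ v.degree := by
      rw [dpk, dv]
      intro h
      exact hmn ⟨k, by rw [mul_comm]; exact_mod_cast h.symm⟩
    have h1 : v.degree ≤ (v + C μ * u ^ k).degree := aux_deg_add_ge _ _ hne
    exact max_le_max le_rfl h1
  · -- ET3
    subst hq
    simp only
    -- the component with nonzero coefficient on the higher-degree polynomial has full degree
    have key : ∀ a b : K, a ≠ 0 → m > n → (C a * u + C b * v).degree = u.degree := by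
      intro a b ha hgt
      have hlt2 : (C b * v).degree < (C a * u).degree := by
        rw [degree_C_mul ha]
        calc (C b * v).degree ≤ v.degree := by
              rcases eq_or_ne b 0 with rfl | hb
              · simp
              · rw [degree_C_mul hb]
          _ < u.degree := by rw [du, dv]; exact_mod_cast hgt
      rw [degree_add_eq_left_of_degree_lt hlt2, degree_C_mul ha]
    have key' : ∀ a b : K, b ≠ 0 → n > m → (C a * u + C b * v).degree = v.degree := by
      intro a b hb hgt
      have hlt2 : (C a * u).degree < (C b * v).degree := by
        rw [degree_C_mul hb]
        calc (C a * u).degree ≤ u.degree := by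
              rcases eq_or_ne a 0 with rfl | ha
              · simp
              · rw [degree_C_mul ha]
          _ < v.degree := by rw [du, dv]; exact_mod_cast hgt
      rw [degree_add_eq_right_of_degree_lt hlt2, degree_C_mul hb]
    rcases lt_or_gt_of_ne hmne with hlt | hgt
    · -- n > m : need some of a₂, b₂ nonzero
      have : a₂ ≠ 0 ∨ b₂ ≠ 0 := by
        by_contra h
        push_neg at h
        apply hdet
        rw [h.1, h.2]; ring
      have hmax : max u.degree v.degree = v.degree := by
        rw [du, dv]; exact max_eq_right (by exact_mod_cast hlt.le)
      rw [hmax]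
      rcases this with h2 | h2
      · exact le_max_of_le_left (key' a₁ a₂ h2 hlt).ge
      · exact le_max_of_le_right (key' b₁ b₂ h2 hlt).ge
    · have : a₁ ≠ 0 ∨ b₁ ≠ 0 := by
        by_contra h
        push_neg at h
        apply hdet
        rw [h.1, h.2]; ring
      have hmax : max u.degree v.degree = u.degree := by
        rw [du, dv]; exact max_eq_left (by exact_mod_cast hgt.le)
      rw [hmax]
      rcases this with h2 | h2
      · exact le_max_of_le_left (key a₁ a₂ h2 hgt).ge
      · exact le_max_of_le_right (key b₁ b₂ h2 hgt).ge
end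

section
/- Let K be a field and β the K-algebra endomorphism of K[x,y] given by x ↦ x + μy^k, y ↦ y, with μ ∈ K* and k ≥ 1. If p = ax^n + by^m + Σ_{im+jn ≤ mn, i,j>0} c_{ij}x^i y^j and kn < m, then β(p) = ax^n + by^m + (terms x^i y^j with im + jn ≤ mn, i,j not both such that the monomial is x^n or y^m), i.e., β(p) again has the form a'x^n + b'y^m + Σ_{im+jn ≤ mn} c'_{ij}x^i y^j with a' = a, b' = b. -/
open MvPolynomial

private lemma monomial_split {K : Type*} [CommRing K] {σ : Type*} (a b : σ) (t s : ℕ) (c : K) :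
    (monomial (Finsupp.single a t + Finsupp.single b s) c
      : MvPolynomial σ K) = C c * X a ^ t * X b ^ s := by
  rw [X_pow_eq_monomial, X_pow_eq_monomial, C_apply, monomial_mul, monomial_mul]
  simp

private lemma key {K : Type*} [CommRing K] {σ : Type*} (a b : σ) (μ : K) (k : ℕ)
    (d : Fin 2 →₀ ℕ) (c : K) :
    aeval ![X a + C μ * X b ^ k, X b] (monomial d c) =
    ∑ t ∈ Finset.range (d 0 + 1),
      monomial (Finsupp.single a t + Finsupp.single b (d 1 + k * (d 0 - t)))
        (c * μ ^ (d 0 - t) * (d 0).choose t) := by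
  rw [aeval_monomial, Finsupp.prod_pow, Fin.prod_univ_two]
  simp only [Matrix.cons_val_zero, Matrix.cons_val_one, Matrix.head_cons]
  rw [add_pow, Finset.sum_mul, Finset.mul_sum]
  refine Finset.sum_congr rfl fun t ht => ?_
  rw [monomial_split]
  simp only [C_mul, C_pow, map_natCast, mul_pow, algebraMap_eq]
  ring

private lemma pair_eq_left {σ : Type*} {a b : σ} (hab : a ≠ b) {t s n : ℕ}
    (h : Finsupp.single a t + Finsupp.single b s = Finsupp.single a n) :
    t = n ∧ s = 0 := by
  classical
  have h0 := DFunLike.congr_fun h a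
  have h1 := DFunLike.congr_fun h b
  simp [Finsupp.single_apply, hab, Ne.symm hab] at h0 h1
  exact ⟨h0, h1⟩

private lemma pair_eq_right {σ : Type*} {a b : σ} (hab : a ≠ b) {t s n : ℕ}
    (h : Finsupp.single a t + Finsupp.single b s = Finsupp.single b n) :
    t = 0 ∧ s = n := by
  classical
  have h0 := DFunLike.congr_fun h a
  have h1 := DFunLike.congr_fun h b
  simp [Finsupp.single_apply, hab, Ne.symm hab] at h0 h1
  exact ⟨h0, h1⟩

private lemma main_lemma {K : Type*} [Field K] {σ : Type*} (a b : σ) (hab : a ≠ b)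
    (m n k : ℕ) (μ : K) (hk : 1 ≤ k) (hkn : k * n < m)
    (p : MvPolynomial (Fin 2) K)
    (hsupp : ∀ d ∈ p.support, d = Finsupp.single (0 : Fin 2) n ∨
        d = Finsupp.single (1 : Fin 2) m ∨
        (0 < d 0 ∧ 0 < d 1 ∧ d 0 * m + d 1 * n ≤ m * n)) :
    (∀ d ∈ (aeval ![X a + C μ * X b ^ k, X b] p).support, d a * m + d b * n ≤ m * n) ∧
    (aeval ![X a + C μ * X b ^ k, X b] p).coeff (Finsupp.single a n)
      = p.coeff (Finsupp.single (0 : Fin 2) n) ∧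
    (aeval ![X a + C μ * X b ^ k, X b] p).coeff (Finsupp.single b m)
      = p.coeff (Finsupp.single (1 : Fin 2) m) := by
  classical
  have hp : aeval ![X a + C μ * X b ^ k, X b] p =
      ∑ d ∈ p.support, ∑ t ∈ Finset.range (d 0 + 1),
        monomial (Finsupp.single a t + Finsupp.single b (d 1 + k * (d 0 - t)))
          (p.coeff d * μ ^ (d 0 - t) * (d 0).choose t) := by
    conv_lhs => rw [← p.support_sum_monomial_coeff, map_sum]
    exact Finset.sum_congr rfl fun d _ => key a b μ k d (p.coeff d)
  have hbnd : ∀ d ∈ p.support, d 0 * m + d 1 * n ≤ m * n := by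
    intro d hd
    rcases hsupp d hd with h | h | ⟨_, _, h⟩
    · subst h; simp [Finsupp.single_apply, Nat.mul_comm]
    · subst h; simp [Finsupp.single_apply]
    · exact h
  refine ⟨?_, ?_, ?_⟩
  · intro e he
    rw [mem_support_iff, hp, MvPolynomial.coeff_sum] at he
    obtain ⟨d, hd, hne⟩ := Finset.exists_ne_zero_of_sum_ne_zero he
    rw [MvPolynomial.coeff_sum] at hne
    obtain ⟨t, ht, hne⟩ := Finset.exists_ne_zero_of_sum_ne_zero hne
    rw [coeff_monomial] at hne
    have heq : Finsupp.single a t + Finsupp.single b (d 1 + k * (d 0 - t)) = e := by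
      by_contra hc
      rw [if_neg hc] at hne
      exact hne rfl
    have hea : e a = t := by
      rw [← heq]; simp [Finsupp.single_apply, Ne.symm hab]
    have heb : e b = d 1 + k * (d 0 - t) := by
      rw [← heq]; simp [Finsupp.single_apply, hab]
    have htle : t ≤ d 0 := Nat.lt_succ_iff.mp (Finset.mem_range.mp ht)
    obtain ⟨s, hs⟩ : ∃ s, d 0 = t + s := ⟨d 0 - t, (Nat.add_sub_cancel' htle).symm⟩
    have hb' := hbnd d hd
    have hsub : d 0 - t = s := by omega
    rw [hea, heb, hsub, hs] at *
    have h2 : s * (k * n) ≤ s * m := Nat.mul_le_mul_left s hkn.le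
    have h3 : (t + s) * m = t * m + s * m := by ring
    have h4 : (d 1 + k * s) * n = d 1 * n + k * s * n := by ring
    have h5 : s * (k * n) = k * s * n := by ring
    linarith
  · rw [hp, MvPolynomial.coeff_sum]
    have hinner : ∀ d ∈ p.support,
        (∑ t ∈ Finset.range (d 0 + 1),
          monomial (Finsupp.single a t + Finsupp.single b (d 1 + k * (d 0 - t)))
            (p.coeff d * μ ^ (d 0 - t) * (d 0).choose t)).coeff (Finsupp.single a n)
        = if d = Finsupp.single (0 : Fin 2) n then p.coeff d else 0 := by
      intro d hd
      rw [MvPolynomial.coeff_sum]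
      by_cases hdc : d = Finsupp.single (0 : Fin 2) n
      · rw [if_pos hdc]
        have hd0 : d 0 = n := by rw [hdc]; simp
        have hd1 : d 1 = 0 := by rw [hdc]; simp [Finsupp.single_apply]
        rw [hd0, hd1]
        rw [Finset.sum_eq_single_of_mem n (Finset.mem_range.mpr (by omega))]
        · simp [coeff_monomial, Nat.sub_self]
        · intro t _ htn
          have hc : Finsupp.single a t + Finsupp.single b (0 + k * (n - t))
              ≠ Finsupp.single a n := fun hc => htn (pair_eq_left hab hc).1
          rw [coeff_monomial, if_neg hc]
      · rw [if_neg hdc]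
        refine Finset.sum_eq_zero fun t ht => ?_
        have hc : Finsupp.single a t + Finsupp.single b (d 1 + k * (d 0 - t))
            ≠ Finsupp.single a n := by
          intro hc
          obtain ⟨htn, hz⟩ := pair_eq_left hab hc
          have hd1 : d 1 = 0 := by omega
          have h0t : k * (d 0 - t) = 0 := by omega
          have hd0t : d 0 - t = 0 := by
            rcases Nat.mul_eq_zero.mp h0t with h | h
            · omega
            · exact h
          have htle : t ≤ d 0 := Nat.lt_succ_iff.mp (Finset.mem_range.mp ht)
          have hd0 : d 0 = n := by omega
          apply hdc
          ext i
          fin_cases i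
          · simpa using hd0
          · simp only [Finsupp.single_apply]
            simpa [Finsupp.single_apply] using hd1
        rw [coeff_monomial, if_neg hc]
    rw [Finset.sum_congr rfl hinner, Finset.sum_ite_eq' p.support
      (Finsupp.single (0 : Fin 2) n) (fun d => p.coeff d)]
    split
    · rfl
    · next h => exact ((notMem_support_iff.mp h)).symm
  · rw [hp, MvPolynomial.coeff_sum]
    have hinner : ∀ d ∈ p.support,
        (∑ t ∈ Finset.range (d 0 + 1),
          monomial (Finsupp.single a t + Finsupp.single b (d 1 + k * (d 0 - t)))
            (p.coeff d * μ ^ (d 0 - t) * (d 0).choose t)).coeff (Finsupp.single b m)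
        = if d = Finsupp.single (1 : Fin 2) m then p.coeff d else 0 := by
      intro d hd
      rw [MvPolynomial.coeff_sum]
      by_cases hdc : d = Finsupp.single (1 : Fin 2) m
      · rw [if_pos hdc]
        have hd0 : d 0 = 0 := by rw [hdc]; simp [Finsupp.single_apply]
        have hd1 : d 1 = m := by rw [hdc]; simp
        rw [hd0, hd1]
        simp [coeff_monomial]
      · rw [if_neg hdc]
        refine Finset.sum_eq_zero fun t ht => ?_
        have hc : Finsupp.single a t + Finsupp.single b (d 1 + k * (d 0 - t))
            ≠ Finsupp.single b m := by
          intro hc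
          obtain ⟨ht0, hm⟩ := pair_eq_right hab hc
          subst ht0
          rw [Nat.sub_zero] at hm
          rcases hsupp d hd with h | h | ⟨hd0, hd1, hb'⟩
          · have e0 : d 0 = n := by rw [h]; simp
            have e1 : d 1 = 0 := by rw [h]; simp [Finsupp.single_apply]
            rw [e0, e1] at hm
            omega
          · exact hdc h
          · have h1 : d 1 * n + k * d 0 * n = m * n := by
              rw [← hm]; ring
            have h2 : d 0 * (k * n) < d 0 * m := by
              exact mul_lt_mul_of_pos_left hkn hd0
            have h3 : d 0 * (k * n) = k * d 0 * n := by ring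
            linarith
        rw [coeff_monomial, if_neg hc]
    rw [Finset.sum_congr rfl hinner, Finset.sum_ite_eq' p.support
      (Finsupp.single (1 : Fin 2) m) (fun d => p.coeff d)]
    split
    · rfl
    · next h => exact ((notMem_support_iff.mp h)).symm

/-- Lemma 3.2, case `k*n < m`: the elementary endomorphism `β : x ↦ x + μ y^k, y ↦ y`
preserves the triangular Newton polygon form with vertices `(n,0)` and `(0,m)`:
every monomial `x^i y^j` of `β p` satisfies `i*m + j*n ≤ m*n`, and the coefficients of
`x^n` and `y^m` are unchanged. -/
theorem elementary_preserves_triangle (K : Type*) [Field K] (m n k : ℕ) (μ : K)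
    (hμ : μ ≠ 0) (hk : 1 ≤ k) (hkn : k * n < m)
    (p : MvPolynomial (Fin 2) K)
    (hsupp : ∀ d ∈ p.support, d = Finsupp.single (0 : Fin 2) n ∨
        d = Finsupp.single (1 : Fin 2) m ∨
        (0 < d 0 ∧ 0 < d 1 ∧ d 0 * m + d 1 * n ≤ m * n)) :
    (∀ d ∈ (aeval ![X 0 + C μ * X 1 ^ k, X 1] p).support, d 0 * m + d 1 * n ≤ m * n) ∧
    (aeval ![X 0 + C μ * X 1 ^ k, X 1] p).coeff (Finsupp.single (0 : Fin 2) n)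
      = p.coeff (Finsupp.single (0 : Fin 2) n) ∧
    (aeval ![X 0 + C μ * X 1 ^ k, X 1] p).coeff (Finsupp.single (1 : Fin 2) m)
      = p.coeff (Finsupp.single (1 : Fin 2) m) := by
  refine ⟨(main_lemma (0 : ℕ) 1 (by omega) m n k μ hk hkn p hsupp).1,
    (main_lemma (0 : Fin 2) 1 (by decide) m n k μ hk hkn p hsupp).2.1,
    (main_lemma (0 : Fin 2) 1 (by decide) m n k μ hk hkn p hsupp).2.2⟩
end

section
/- Let K be a field and β the K-algebra endomorphism of K[x,y] given by x ↦ x + μy^k, y ↦ y, μ ∈ K*, k ≥ 2. If p = ax^n + by^m + Σ_{im+jn ≤ mn, i,j>0} c_{ij}x^i y^j with a ≠ 0 and kn > m, then β(p) has the form a x^n + aμ^n y^{kn} + Σ_{i·kn + j·n ≤ kn², i,j>0} c'_{ij} x^i y^j; in particular every monomial x^i y^j of β(p) satisfies i·k + j ≤ kn. -/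
open MvPolynomial Finsupp Finset

private lemma fin2_ext {f g : Fin 2 →₀ ℕ} (h0 : f 0 = g 0) (h1 : f 1 = g 1) : f = g := by
  ext i; fin_cases i <;> assumption

private lemma fin2_pair_eq_iff {t s u v : ℕ} :
    single (0:Fin 2) t + single 1 s = single (0:Fin 2) u + single 1 v ↔ t = u ∧ s = v := by
  constructor
  · intro h
    have h0 := DFunLike.congr_fun h (0:Fin 2)
    have h1 := DFunLike.congr_fun h (1:Fin 2)
    simp [Finsupp.single_apply] at h0 h1
    exact ⟨h0, h1⟩
  · rintro ⟨rfl, rfl⟩; rfl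

private lemma eq_single0_iff {t s u : ℕ} :
    single (0:Fin 2) t + single 1 s = single (0:Fin 2) u ↔ t = u ∧ s = 0 := by
  rw [show single (0:Fin 2) u = single (0:Fin 2) u + single 1 0 by simp, fin2_pair_eq_iff]

private lemma eq_single1_iff {t s v : ℕ} :
    single (0:Fin 2) t + single 1 s = single (1:Fin 2) v ↔ t = 0 ∧ s = v := by
  rw [show single (1:Fin 2) v = single (0:Fin 2) 0 + single 1 v by simp, fin2_pair_eq_iff]

private lemma beta_monomial {K : Type*} [Field K] {σ : Type*} (i j : σ) (k : ℕ) (μ : K)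
    (d : Fin 2 →₀ ℕ) (c : K) :
    aeval ![X i + C μ * X j ^ k, X j] (monomial d c) =
    ∑ t ∈ range (d 0 + 1),
      monomial (single i t + single j (k * (d 0 - t) + d 1))
        (c * ((d 0).choose t : K) * μ ^ (d 0 - t)) := by
  rw [aeval_monomial, Finsupp.prod_pow, Fin.prod_univ_two]
  simp only [Matrix.cons_val_zero, Matrix.cons_val_one, Matrix.head_cons]
  rw [add_pow, Finset.sum_mul, Finset.mul_sum]
  refine Finset.sum_congr rfl fun t ht => ?_
  simp only [mul_pow, ← C_pow, ← pow_mul, algebraMap_eq]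
  rw [X_pow_eq_monomial, X_pow_eq_monomial, X_pow_eq_monomial, ← C_eq_coe_nat]
  simp only [C_apply, monomial_mul]
  rw [Finsupp.single_add]
  congr 1
  · abel
  · ring

private lemma mixed_bound {m n k d0 d1 : ℕ} (hkn : m < k * n) (hd0 : 0 < d0) (hd1 : 0 < d1)
    (h : d0 * m + d1 * n ≤ m * n) : k * d0 + d1 < k * n := by
  obtain rfl | hn := Nat.eq_zero_or_pos n
  · simp at hkn
  have hm : 0 < m := by
    rcases Nat.eq_zero_or_pos m with rfl | hm
    · nlinarith
    · exact hm
  have hd0n : d0 < n := by nlinarith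
  set s := n - d0 with hs
  have hs0 : 0 < s := by omega
  have hms : m * s + m * d0 = m * n := by rw [← Nat.mul_add]; congr 1; omega
  have h1 : d1 * n ≤ m * s := by linarith [h, hms]
  have h2 : m * s < (k * n) * s := (Nat.mul_lt_mul_right hs0).mpr hkn
  have h4 : d1 < k * s := by
    have h3 : d1 * n < (k * s) * n := by
      calc d1 * n ≤ m * s := h1
        _ < (k * n) * s := h2
        _ = (k * s) * n := by ring
    exact Nat.lt_of_mul_lt_mul_right h3
  have h5 : k * d0 + k * s = k * n := by rw [← Nat.mul_add]; congr 1; omega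
  linarith

/-- Lemma 3.2, case `k*n > m`: the elementary endomorphism `β : x ↦ x + μ y^k, y ↦ y`
turns a polynomial with triangular Newton polygon with vertices `(n,0), (0,m)` and
`a = coeff x^n ≠ 0` into one of the form `a x^n + a μ^n y^(k*n) + (lower terms)`:
every monomial `x^i y^j` of `β p` satisfies `i*(k*n) + j*n ≤ (k*n)*n`,
i.e. `i*k + j ≤ k*n`. -/
theorem elementary_new_triangle (K : Type*) [Field K] (m n k : ℕ) (μ : K)
    (hμ : μ ≠ 0) (hk : 2 ≤ k) (hkn : m < k * n)
    (p : MvPolynomial (Fin 2) K)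
    (ha : p.coeff (Finsupp.single (0 : Fin 2) n) ≠ 0)
    (hsupp : ∀ d ∈ p.support, d = Finsupp.single (0 : Fin 2) n ∨
        d = Finsupp.single (1 : Fin 2) m ∨
        (0 < d 0 ∧ 0 < d 1 ∧ d 0 * m + d 1 * n ≤ m * n)) :
    (aeval ![X 0 + C μ * X 1 ^ k, X 1] p).coeff (Finsupp.single (0 : Fin 2) n)
      = p.coeff (Finsupp.single (0 : Fin 2) n) ∧
    (aeval ![X 0 + C μ * X 1 ^ k, X 1] p).coeff (Finsupp.single (1 : Fin 2) (k * n))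
      = p.coeff (Finsupp.single (0 : Fin 2) n) * μ ^ n ∧
    (∀ d ∈ (aeval ![X 0 + C μ * X 1 ^ k, X 1] p).support,
      d 0 * (k * n) + d 1 * n ≤ (k * n) * n ∧ d 0 * k + d 1 ≤ k * n) := by
  have hn : 0 < n := by
    obtain rfl | hn := Nat.eq_zero_or_pos n
    · simp at hkn
    · exact hn
  have hsn0 : (single (0:Fin 2) n) 0 = n := by simp
  have hsn1 : (single (0:Fin 2) n) 1 = 0 := by simp [Finsupp.single_apply]
  have hexp : aeval ![X 0 + C μ * X 1 ^ k, X 1] p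
      = ∑ d ∈ p.support, ∑ t ∈ range (d 0 + 1),
          monomial (single (0:Fin 2) t + single 1 (k * (d 0 - t) + d 1))
            (p.coeff d * ((d 0).choose t : K) * μ ^ (d 0 - t)) := by
    conv_lhs => rw [p.as_sum]
    rw [map_sum]
    exact Finset.sum_congr rfl fun d _ => beta_monomial 0 1 k μ d (p.coeff d)
  have hmem : (single (0:Fin 2) n) ∈ p.support := MvPolynomial.mem_support_iff.mpr ha
  have hbound : ∀ d ∈ p.support, k * d 0 + d 1 ≤ k * n := by
    intro d hd
    rcases hsupp d hd with rfl | rfl | ⟨h1, h2, h3⟩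
    · simp [hsn0, hsn1]
    · have h0 : (single (1:Fin 2) m) 0 = 0 := by simp [Finsupp.single_apply]
      have h1 : (single (1:Fin 2) m) 1 = m := by simp
      rw [h0, h1]; omega
    · exact (mixed_bound hkn h1 h2 h3).le
  refine ⟨?_, ?_, ?_⟩
  · -- coefficient at x^n
    rw [hexp, MvPolynomial.coeff_sum,
      Finset.sum_eq_single_of_mem _ hmem (fun d hd hdn => ?_)]
    · rw [MvPolynomial.coeff_sum]
      simp only [hsn0, hsn1]
      rw [Finset.sum_eq_single_of_mem n (Finset.mem_range.mpr (by omega))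
        (fun t ht htn => ?_)]
      · rw [coeff_monomial, if_pos (by simp)]
        simp
      · rw [coeff_monomial, if_neg]
        rw [eq_single0_iff]
        rintro ⟨rfl, -⟩; exact htn rfl
    · rw [MvPolynomial.coeff_sum]
      refine Finset.sum_eq_zero fun t ht => ?_
      rw [coeff_monomial, if_neg]
      rw [eq_single0_iff]
      rintro ⟨rfl, h1⟩
      rw [Finset.mem_range] at ht
      have hdt : k * (d 0 - t) = 0 ∧ d 1 = 0 := by omega
      have hd0 : d 0 = t := by
        rcases Nat.mul_eq_zero.mp hdt.1 with h | h <;> omega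
      exact hdn (fin2_ext (by simp [hd0]) (by simp [Finsupp.single_apply, hdt.2]))
  · -- coefficient at y^(k*n)
    rw [hexp, MvPolynomial.coeff_sum,
      Finset.sum_eq_single_of_mem _ hmem (fun d hd hdn => ?_)]
    · rw [MvPolynomial.coeff_sum]
      simp only [hsn0, hsn1]
      rw [Finset.sum_eq_single_of_mem 0 (Finset.mem_range.mpr (by omega))
        (fun t ht htn => ?_)]
      · rw [coeff_monomial, if_pos (by simp)]
        simp
      · rw [coeff_monomial, if_neg]
        rw [eq_single1_iff]
        rintro ⟨rfl, -⟩; exact htn rfl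
    · rw [MvPolynomial.coeff_sum]
      refine Finset.sum_eq_zero fun t ht => ?_
      rw [coeff_monomial, if_neg]
      rw [eq_single1_iff]
      rintro ⟨rfl, h1⟩
      rw [Nat.sub_zero] at h1
      rcases hsupp d hd with rfl | rfl | ⟨h2, h3, h4⟩
      · exact hdn rfl
      · rw [show (single (1:Fin 2) m) 0 = 0 by simp [Finsupp.single_apply],
          show (single (1:Fin 2) m) 1 = m by simp] at h1
        omega
      · exact absurd h1 (mixed_bound hkn h2 h3 h4).ne
  · -- support bound
    intro e he
    have hexp3 : aeval ![(X 0 : MvPolynomial ℕ K) + C μ * X 1 ^ k, X 1] p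
        = ∑ d ∈ p.support, ∑ t ∈ range (d 0 + 1),
            monomial (single (0:ℕ) t + single 1 (k * (d 0 - t) + d 1))
              (p.coeff d * ((d 0).choose t : K) * μ ^ (d 0 - t)) := by
      conv_lhs => rw [p.as_sum]
      rw [map_sum]
      exact Finset.sum_congr rfl fun d _ => beta_monomial 0 1 k μ d (p.coeff d)
    rw [hexp3] at he
    obtain ⟨d, hd, hin⟩ := Finset.mem_biUnion.mp (MvPolynomial.support_sum he)
    obtain ⟨t, ht, hin2⟩ := Finset.mem_biUnion.mp (MvPolynomial.support_sum hin)
    have he' : e = single (0:ℕ) t + single 1 (k * (d 0 - t) + d 1) := by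
      have := MvPolynomial.support_monomial_subset hin2
      simpa using this
    rw [Finset.mem_range] at ht
    have he0 : e 0 = t := by simp [he', Finsupp.single_apply]
    have he1 : e 1 = k * (d 0 - t) + d 1 := by simp [he', Finsupp.single_apply]
    have hsplit : k * (d 0 - t) + k * t = k * d 0 := by rw [← Nat.mul_add]; congr 1; omega
    have hkey : e 0 * k + e 1 = k * d 0 + d 1 := by
      rw [he0, he1, Nat.mul_comm t k]; omega
    have hb := hbound d hd
    constructor
    · calc e 0 * (k * n) + e 1 * n = (e 0 * k + e 1) * n := by ring
        _ ≤ (k * n) * n := Nat.mul_le_mul_right _ (by omega)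
    · omega
end

section
/- Let p₀, p₁, ..., p_k be distinct primes. Then the ℂ-algebras ℂ[x,y]/⟨y − x^{p₀} + y^{p₁p₂⋯p_k}⟩ and ℂ[x,y]/⟨y − (x^{p₀} − y^{p₂⋯p_k})^{p₁}⟩ are isomorphic. -/
set_option maxHeartbeats 1000000

open MvPolynomial

/-- For distinct primes `p₀, p₁, ..., p_k`, the ℂ-algebras
`ℂ[x,y]/⟨y - x^{p₀} + y^{p₁⋯p_k}⟩` and `ℂ[x,y]/⟨y - (x^{p₀} - y^{p₂⋯p_k})^{p₁}⟩`
are isomorphic. -/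
theorem quotients_isomorphic (k : ℕ) (hk : 1 ≤ k) (p : Fin (k + 1) → ℕ)
    (hprime : ∀ i, (p i).Prime) (hinj : Function.Injective p) :
    Nonempty
      ((MvPolynomial (Fin 2) ℂ ⧸ Ideal.span
          {(X 1 - X 0 ^ p 0 + X 1 ^ (∏ i ∈ Finset.Ioi (0 : Fin (k + 1)), p i) :
            MvPolynomial (Fin 2) ℂ)}) ≃ₐ[ℂ]
       (MvPolynomial (Fin 2) ℂ ⧸ Ideal.span
          {(X 1 - (X 0 ^ p 0 - X 1 ^ (∏ i ∈ Finset.Ioi (1 : Fin (k + 1)), p i)) ^ p 1 :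
            MvPolynomial (Fin 2) ℂ)})) := by
  classical
  set P : ℕ := ∏ i ∈ Finset.Ioi (0 : Fin (k + 1)), p i with hP
  set Q : ℕ := ∏ i ∈ Finset.Ioi (1 : Fin (k + 1)), p i with hQ
  have hval1 : ((1 : Fin (k + 1)) : ℕ) = 1 := by
    have h2 : 1 < k + 1 := by omega
    simp [Fin.val_one', Nat.mod_eq_of_lt h2]
  have hIoi : Finset.Ioi (0 : Fin (k + 1)) = insert 1 (Finset.Ioi (1 : Fin (k + 1))) := by
    ext i
    simp only [Finset.mem_Ioi, Finset.mem_insert, Fin.lt_def, Fin.ext_iff, hval1, Fin.val_zero]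
    omega
  have hPQ : P = p 1 * Q := by
    rw [hP, hIoi, Finset.prod_insert (by simp)]
  set f₁ : MvPolynomial (Fin 2) ℂ := X 1 - X 0 ^ p 0 + X 1 ^ P with hf₁
  set f₂ : MvPolynomial (Fin 2) ℂ := X 1 - (X 0 ^ p 0 - X 1 ^ Q) ^ p 1 with hf₂
  set I₁ : Ideal (MvPolynomial (Fin 2) ℂ) := Ideal.span {f₁} with hI₁
  set I₂ : Ideal (MvPolynomial (Fin 2) ℂ) := Ideal.span {f₂} with hI₂
  set mk₁ : MvPolynomial (Fin 2) ℂ →ₐ[ℂ] MvPolynomial (Fin 2) ℂ ⧸ I₁ :=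
    Ideal.Quotient.mkₐ ℂ I₁ with hmk₁
  set mk₂ : MvPolynomial (Fin 2) ℂ →ₐ[ℂ] MvPolynomial (Fin 2) ℂ ⧸ I₂ :=
    Ideal.Quotient.mkₐ ℂ I₂ with hmk₂
  -- the defining relations hold in the quotients
  have hrel₁ : mk₁ (X 0) ^ p 0 - mk₁ (X 1) ^ P = mk₁ (X 1) := by
    have : mk₁ (X 0 ^ p 0 - X 1 ^ P) = mk₁ (X 1) := by
      rw [hmk₁, Ideal.Quotient.mkₐ_eq_mk, Ideal.Quotient.eq]
      have hh : (X 0 ^ p 0 - X 1 ^ P : MvPolynomial (Fin 2) ℂ) - X 1 = -f₁ := by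
        rw [hf₁]; ring
      rw [hh]
      exact I₁.neg_mem (Ideal.subset_span rfl)
    simpa [map_sub, map_pow] using this
  have hrel₂ : (mk₂ (X 0) ^ p 0 - mk₂ (X 1) ^ Q) ^ p 1 = mk₂ (X 1) := by
    have : mk₂ ((X 0 ^ p 0 - X 1 ^ Q) ^ p 1) = mk₂ (X 1) := by
      rw [hmk₂, Ideal.Quotient.mkₐ_eq_mk, Ideal.Quotient.eq]
      have hh : ((X 0 ^ p 0 - X 1 ^ Q : MvPolynomial (Fin 2) ℂ) ^ p 1) - X 1 = -f₂ := by
        rw [hf₂]; ring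
      rw [hh]
      exact I₂.neg_mem (Ideal.subset_span rfl)
    simpa [map_sub, map_pow] using this
  -- the underlying algebra maps
  set φ₀ : MvPolynomial (Fin 2) ℂ →ₐ[ℂ] MvPolynomial (Fin 2) ℂ ⧸ I₂ :=
    aeval ![mk₂ (X 0), mk₂ (X 0 ^ p 0 - X 1 ^ Q)] with hφ₀
  set ψ₀ : MvPolynomial (Fin 2) ℂ →ₐ[ℂ] MvPolynomial (Fin 2) ℂ ⧸ I₁ :=
    aeval ![mk₁ (X 0), mk₁ (X 1 ^ p 1)] with hψ₀
  have hφ₀0 : φ₀ (X 0) = mk₂ (X 0) := by simp [hφ₀]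
  have hφ₀1 : φ₀ (X 1) = mk₂ (X 0) ^ p 0 - mk₂ (X 1) ^ Q := by simp [hφ₀]
  have hψ₀0 : ψ₀ (X 0) = mk₁ (X 0) := by simp [hψ₀]
  have hψ₀1 : ψ₀ (X 1) = mk₁ (X 1) ^ p 1 := by simp [hψ₀]
  have hφf₁ : φ₀ f₁ = 0 := by
    rw [hf₁, map_add, map_sub, map_pow, map_pow, hφ₀0, hφ₀1, hPQ, pow_mul, hrel₂]
    ring
  have hψf₂ : ψ₀ f₂ = 0 := by
    rw [hf₂, map_sub, map_pow, map_sub, map_pow, map_pow, hψ₀0, hψ₀1, ← pow_mul, ← hPQ, hrel₁]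
    ring
  have hliftφ : ∀ a ∈ I₁, φ₀ a = 0 := by
    intro a ha
    rw [hI₁, Ideal.mem_span_singleton] at ha
    obtain ⟨c, rfl⟩ := ha
    rw [map_mul, hφf₁, zero_mul]
  have hliftψ : ∀ a ∈ I₂, ψ₀ a = 0 := by
    intro a ha
    rw [hI₂, Ideal.mem_span_singleton] at ha
    obtain ⟨c, rfl⟩ := ha
    rw [map_mul, hψf₂, zero_mul]
  set φ := Ideal.Quotient.liftₐ I₁ φ₀ hliftφ with hφ
  set ψ := Ideal.Quotient.liftₐ I₂ ψ₀ hliftψ with hψ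
  have hφmk : ∀ a, φ (mk₁ a) = φ₀ a := fun a => by
    rw [hφ, hmk₁, Ideal.Quotient.mkₐ_eq_mk, Ideal.Quotient.liftₐ_apply]
    rfl
  have hψmk : ∀ a, ψ (mk₂ a) = ψ₀ a := fun a => by
    rw [hψ, hmk₂, Ideal.Quotient.mkₐ_eq_mk, Ideal.Quotient.liftₐ_apply]
    rfl
  have h1 : φ.comp ψ = AlgHom.id ℂ (MvPolynomial (Fin 2) ℂ ⧸ I₂) := by
    apply Ideal.Quotient.algHom_ext
    apply MvPolynomial.algHom_ext
    intro i
    fin_cases i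
    · show φ (ψ (mk₂ (X 0))) = mk₂ (X 0)
      rw [hψmk, hψ₀0, hφmk, hφ₀0]
    · show φ (ψ (mk₂ (X 1))) = mk₂ (X 1)
      rw [hψmk, hψ₀1, map_pow, hφmk, hφ₀1, hrel₂]
  have h2 : ψ.comp φ = AlgHom.id ℂ (MvPolynomial (Fin 2) ℂ ⧸ I₁) := by
    apply Ideal.Quotient.algHom_ext
    apply MvPolynomial.algHom_ext
    intro i
    fin_cases i
    · show ψ (φ (mk₁ (X 0))) = mk₁ (X 0)
      rw [hφmk, hφ₀0, hψmk, hψ₀0]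
    · show ψ (φ (mk₁ (X 1))) = mk₁ (X 1)
      rw [hφmk, hφ₀1, map_sub, map_pow, map_pow, hψmk, hψmk, hψ₀0, hψ₀1,
        ← pow_mul, ← hPQ, hrel₁]
  exact ⟨AlgEquiv.ofAlgHom φ ψ h1 h2⟩
end

section
/- Let K be a field and u(x), v(y) ∈ K[x], K[y] nonconstant one-variable polynomials with gcd(deg u, deg v) = 1. Then the two-variable polynomial u(x) + v(y) is irreducible in K[x,y]. -/
open Polynomial

namespace SumCoprimeAux

variable {K : Type*} [Field K] {S : Type*} [CommSemiring S]

/-- Generic "monomial scaling" substitution `x ↦ z₀ t^{w₀}, y ↦ z₁ t^{w₁}`. -/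
noncomputable def Ψ (g : K →+* S) (z : Fin 2 → S) (w : Fin 2 → ℕ) :
    MvPolynomial (Fin 2) K →+* Polynomial S :=
  MvPolynomial.eval₂Hom (Polynomial.C.comp g)
    (fun i => Polynomial.C (z i) * Polynomial.X ^ (w i))

theorem Ψ_monomial (g : K →+* S) (z : Fin 2 → S) (w : Fin 2 → ℕ) (d : Fin 2 →₀ ℕ) (e : K) :
    Ψ g z w (MvPolynomial.monomial d e)
      = Polynomial.monomial (w 0 * d 0 + w 1 * d 1) (g e * (z 0 ^ d 0 * z 1 ^ d 1)) := by
  rw [Ψ, MvPolynomial.eval₂Hom_monomial]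
  rw [Finsupp.prod_fintype _ _ (fun i => pow_zero _), Fin.prod_univ_two]
  simp only [mul_pow, ← map_pow, ← pow_mul, RingHom.coe_comp, Function.comp_apply,
    ← Polynomial.C_mul_X_pow_eq_monomial, map_mul]
  ring

theorem Ψ_coeff (g : K →+* S) (z : Fin 2 → S) (w : Fin 2 → ℕ) (p : MvPolynomial (Fin 2) K)
    (e : ℕ) :
    (Ψ g z w p).coeff e = ∑ d ∈ p.support,
      if w 0 * d 0 + w 1 * d 1 = e then g (MvPolynomial.coeff d p) * (z 0 ^ d 0 * z 1 ^ d 1)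
      else 0 := by
  conv_lhs => rw [← p.support_sum_monomial_coeff, map_sum, Polynomial.finset_sum_coeff]
  exact Finset.sum_congr rfl fun d _ => by rw [Ψ_monomial, Polynomial.coeff_monomial]


/-- The grading map `x ↦ x t^n, y ↦ y t^m`. -/
noncomputable def Φ (m n : ℕ) :
    MvPolynomial (Fin 2) K →+* Polynomial (MvPolynomial (Fin 2) K) :=
  Ψ MvPolynomial.C ![MvPolynomial.X 0, MvPolynomial.X 1] ![n, m]

theorem Φ_coeff_coeff (m n : ℕ) (p : MvPolynomial (Fin 2) K) (e : ℕ) (d : Fin 2 →₀ ℕ) :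
    MvPolynomial.coeff d ((Φ m n p).coeff e)
      = if n * d 0 + m * d 1 = e then MvPolynomial.coeff d p else 0 := by
  rw [Φ, Ψ_coeff, MvPolynomial.coeff_sum]
  have h : ∀ d' ∈ p.support,
      (MvPolynomial.coeff d (if (![n, m] : Fin 2 → ℕ) 0 * d' 0 + (![n, m] : Fin 2 → ℕ) 1 * d' 1 = e
        then MvPolynomial.C (MvPolynomial.coeff d' p) *
          ((![MvPolynomial.X 0, MvPolynomial.X 1] : Fin 2 → MvPolynomial (Fin 2) K) 0 ^ d' 0 *
           (![MvPolynomial.X 0, MvPolynomial.X 1] : Fin 2 → MvPolynomial (Fin 2) K) 1 ^ d' 1)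
        else 0))
      = if d' = d then (if n * d 0 + m * d 1 = e then MvPolynomial.coeff d p else 0) else 0 := by
    intro d' _
    have hmon : MvPolynomial.C (MvPolynomial.coeff d' p) *
        (MvPolynomial.X (0 : Fin 2) ^ d' 0 * MvPolynomial.X (1 : Fin 2) ^ d' 1)
        = MvPolynomial.monomial d' (MvPolynomial.coeff d' p) := by
      rw [MvPolynomial.monomial_eq, Finsupp.prod_fintype _ _ (fun i => pow_zero _),
        Fin.prod_univ_two]
    simp only [Matrix.cons_val_zero, Matrix.cons_val_one, Matrix.head_cons, hmon]
    by_cases hd : d' = d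
    · subst hd
      simp only [if_pos rfl, apply_ite (MvPolynomial.coeff d')]
      simp [MvPolynomial.coeff_monomial]
    · simp [MvPolynomial.coeff_monomial, hd, apply_ite (MvPolynomial.coeff d)]
  rw [Finset.sum_congr rfl h, Finset.sum_ite_eq' p.support d]
  split_ifs with h1 h2 <;> simp_all [MvPolynomial.notMem_support_iff]

theorem Φ_monomial (m n : ℕ) (d : Fin 2 →₀ ℕ) (e : K) :
    Φ m n (MvPolynomial.monomial d e)
      = Polynomial.monomial (n * d 0 + m * d 1) (MvPolynomial.monomial d e) := by
  rw [Φ, Ψ_monomial]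
  have hmon : MvPolynomial.C e *
      (MvPolynomial.X (0 : Fin 2) ^ d 0 * MvPolynomial.X (1 : Fin 2) ^ d 1)
      = MvPolynomial.monomial d e := by
    rw [MvPolynomial.monomial_eq, Finsupp.prod_fintype _ _ (fun i => pow_zero _),
      Fin.prod_univ_two]
  simp only [Matrix.cons_val_zero, Matrix.cons_val_one, Matrix.head_cons, hmon]

theorem Φ_ne_zero (m n : ℕ) {p : MvPolynomial (Fin 2) K} (hp : p ≠ 0) : Φ m n p ≠ 0 := by
  obtain ⟨d, hd⟩ := MvPolynomial.ne_zero_iff.mp hp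
  intro h
  have hc := Φ_coeff_coeff m n p (n * d 0 + m * d 1) d
  rw [h] at hc
  simp only [Polynomial.coeff_zero, MvPolynomial.coeff_zero, if_pos rfl] at hc
  exact hd hc.symm

theorem isUnit_of_isUnit_leadingCoeff_Φ {m n : ℕ} (hm : 0 < m) (hn : 0 < n)
    {p : MvPolynomial (Fin 2) K} (hp : p ≠ 0)
    (h : IsUnit ((Φ m n p).leadingCoeff)) : IsUnit p := by
  have h0 : MvPolynomial.constantCoeff ((Φ m n p).coeff (Φ m n p).natDegree) ≠ 0 :=
    (h.map MvPolynomial.constantCoeff).ne_zero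
  rw [MvPolynomial.constantCoeff_eq] at h0
  have key := Φ_coeff_coeff m n p (Φ m n p).natDegree 0
  simp only [Finsupp.coe_zero, Pi.zero_apply, Nat.mul_zero, Nat.add_zero] at key
  rw [key] at h0
  by_cases hdeg : 0 = (Φ m n p).natDegree
  swap
  · rw [if_neg hdeg] at h0; exact absurd rfl h0
  rw [if_pos hdeg] at h0
  have hsupp : ∀ d ∈ p.support, d = 0 := by
    intro d hd
    have hne : (Φ m n p).coeff (n * d 0 + m * d 1) ≠ 0 := by
      intro hz
      have hc := Φ_coeff_coeff m n p (n * d 0 + m * d 1) d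
      rw [hz] at hc
      simp only [MvPolynomial.coeff_zero, if_pos rfl] at hc
      exact (MvPolynomial.mem_support_iff.mp hd) hc.symm
    have hle := Polynomial.le_natDegree_of_ne_zero hne
    rw [← hdeg, Nat.le_zero] at hle
    have h1 : n * d 0 = 0 ∧ m * d 1 = 0 := by omega
    have hd0 : d 0 = 0 := by
      rcases Nat.mul_eq_zero.mp h1.1 with h' | h' <;> omega
    have hd1 : d 1 = 0 := by
      rcases Nat.mul_eq_zero.mp h1.2 with h' | h' <;> omega
    ext i
    fin_cases i <;> simpa
  have hpC : p = MvPolynomial.C (MvPolynomial.coeff 0 p) := by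
    apply MvPolynomial.ext
    intro d
    by_cases hd : d = 0
    · subst hd; simp [MvPolynomial.coeff_C]
    · rw [MvPolynomial.coeff_C, if_neg (Ne.symm hd)]
      by_contra hne
      exact hd (hsupp d (MvPolynomial.mem_support_iff.mpr hne))
  rw [hpC]
  exact (isUnit_iff_ne_zero.mpr h0).map MvPolynomial.C

theorem aux_coeff_top {S : Type*} [Semiring S] (k N : ℕ) (hk : 0 < k) (g : ℕ → S) :
    (∑ i ∈ Finset.range (N + 1), Polynomial.monomial (k * i) (g i)).coeff (k * N) = g N := by
  rw [Polynomial.finset_sum_coeff]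
  have h : ∀ i ∈ Finset.range (N + 1),
      (Polynomial.monomial (k * i) (g i)).coeff (k * N) = if i = N then g i else 0 := by
    intro i _
    rw [Polynomial.coeff_monomial]
    by_cases h : i = N
    · subst h; simp
    · rw [if_neg (fun hc => h (Nat.eq_of_mul_eq_mul_left hk hc)), if_neg h]
  rw [Finset.sum_congr rfl h, Finset.sum_ite_eq' (Finset.range (N + 1)) N]
  simp

theorem aux_deg_le {S : Type*} [Semiring S] (k N : ℕ) (g : ℕ → S) :
    (∑ i ∈ Finset.range (N + 1), Polynomial.monomial (k * i) (g i)).natDegree ≤ k * N := by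
  apply Polynomial.natDegree_sum_le_of_forall_le
  intro i hi
  refine (Polynomial.natDegree_monomial_le _).trans ?_
  exact Nat.mul_le_mul_left k (Nat.lt_succ_iff.mp (Finset.mem_range.mp hi))

theorem Φ_aeval_left (m n : ℕ) (u : Polynomial K) :
    Φ m n (Polynomial.aeval (MvPolynomial.X 0) u)
      = ∑ i ∈ Finset.range (u.natDegree + 1),
          Polynomial.monomial (n * i)
            (MvPolynomial.monomial (Finsupp.single 0 i) (u.coeff i)) := by
  rw [Polynomial.aeval_eq_sum_range, map_sum]
  refine Finset.sum_congr rfl fun i _ => ?_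
  rw [MvPolynomial.smul_eq_C_mul, MvPolynomial.C_mul_X_pow_eq_monomial, Φ_monomial]
  congr 1
  rw [Finsupp.single_eq_of_ne' (show (0 : Fin 2) ≠ 1 by decide), Finsupp.single_eq_same,
    Nat.mul_zero, Nat.add_zero]

theorem Φ_aeval_right (m n : ℕ) (v : Polynomial K) :
    Φ m n (Polynomial.aeval (MvPolynomial.X 1) v)
      = ∑ j ∈ Finset.range (v.natDegree + 1),
          Polynomial.monomial (m * j)
            (MvPolynomial.monomial (Finsupp.single 1 j) (v.coeff j)) := by
  rw [Polynomial.aeval_eq_sum_range, map_sum]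
  refine Finset.sum_congr rfl fun j _ => ?_
  rw [MvPolynomial.smul_eq_C_mul, MvPolynomial.C_mul_X_pow_eq_monomial, Φ_monomial]
  congr 1
  rw [Finsupp.single_eq_of_ne' (show (1 : Fin 2) ≠ 0 by decide), Finsupp.single_eq_same,
    Nat.mul_zero, Nat.zero_add]

theorem main_reduction (u v : Polynomial K) (hu : 0 < u.natDegree) (hv : 0 < v.natDegree)
    (hT : Irreducible (MvPolynomial.monomial (Finsupp.single 0 u.natDegree) u.leadingCoeff
      + MvPolynomial.monomial (Finsupp.single 1 v.natDegree) v.leadingCoeff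
        : MvPolynomial (Fin 2) K)) :
    Irreducible (Polynomial.aeval (MvPolynomial.X (0 : Fin 2) : MvPolynomial (Fin 2) K) u
      + Polynomial.aeval (MvPolynomial.X (1 : Fin 2) : MvPolynomial (Fin 2) K) v) := by
  set m := u.natDegree with hm
  set n := v.natDegree with hn
  set T : MvPolynomial (Fin 2) K :=
    MvPolynomial.monomial (Finsupp.single 0 m) u.leadingCoeff
      + MvPolynomial.monomial (Finsupp.single 1 n) v.leadingCoeff with hTdef
  set f : MvPolynomial (Fin 2) K :=
    Polynomial.aeval (MvPolynomial.X (0 : Fin 2)) u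
      + Polynomial.aeval (MvPolynomial.X (1 : Fin 2)) v with hfdef
  have hune : u ≠ 0 := Polynomial.ne_zero_of_natDegree_gt hu
  have ha : u.leadingCoeff ≠ 0 := Polynomial.leadingCoeff_ne_zero.mpr hune
  have hTne : T ≠ 0 := by
    intro h
    have hc : MvPolynomial.coeff (Finsupp.single 0 m) T = u.leadingCoeff := by
      rw [hTdef]
      rw [MvPolynomial.coeff_add, MvPolynomial.coeff_monomial, MvPolynomial.coeff_monomial,
        if_pos rfl, if_neg, add_zero]
      intro hc
      have := (Finsupp.single_eq_single_iff _ _ _ _).mp hc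
      rcases this with ⟨h1, _⟩ | ⟨h1, _⟩
      · exact absurd h1 (by decide)
      · omega
    rw [h] at hc
    simp only [MvPolynomial.coeff_zero] at hc
    exact ha hc.symm
  have hcoefftop : (Φ m n f).coeff (n * m) = T := by
    rw [hfdef, map_add (Φ m n), Polynomial.coeff_add, Φ_aeval_left, Φ_aeval_right]
    rw [aux_coeff_top n m hv (fun i => MvPolynomial.monomial (Finsupp.single 0 i) (u.coeff i))]
    rw [show n * m = m * n from Nat.mul_comm n m,
      aux_coeff_top m n hu (fun j => MvPolynomial.monomial (Finsupp.single 1 j) (v.coeff j))]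
    rw [hTdef, show u.coeff m = u.leadingCoeff from Polynomial.coeff_natDegree,
      show v.coeff n = v.leadingCoeff from Polynomial.coeff_natDegree]
  have hdeg_le : (Φ m n f).natDegree ≤ n * m := by
    rw [hfdef, map_add]
    refine (Polynomial.natDegree_add_le _ _).trans (max_le ?_ ?_)
    · rw [Φ_aeval_left]; exact aux_deg_le n m _
    · rw [Φ_aeval_right]
      exact (aux_deg_le m n _).trans (le_of_eq (Nat.mul_comm m n))
  have hdeg : (Φ m n f).natDegree = n * m :=
    le_antisymm hdeg_le (Polynomial.le_natDegree_of_ne_zero (hcoefftop ▸ hTne))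
  have hlead : (Φ m n f).leadingCoeff = T := by
    rw [Polynomial.leadingCoeff, hdeg, hcoefftop]
  have hfne : f ≠ 0 := by
    intro h
    apply hTne
    rw [← hcoefftop, h, map_zero, Polynomial.coeff_zero]
  constructor
  · intro hun
    obtain ⟨g, hg⟩ := hun.exists_right_inv
    have h1 : T * (Φ m n g).leadingCoeff = 1 := by
      rw [← hlead, ← Polynomial.leadingCoeff_mul, ← map_mul, hg, map_one,
        Polynomial.leadingCoeff_one]
    exact hT.not_isUnit (IsUnit.of_mul_eq_one _ h1)
  · intro g h hgh
    have hgne : g ≠ 0 := by rintro rfl; rw [zero_mul] at hgh; exact hfne hgh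
    have hhne : h ≠ 0 := by rintro rfl; rw [mul_zero] at hgh; exact hfne hgh
    have hlm : (Φ m n g).leadingCoeff * (Φ m n h).leadingCoeff = T := by
      rw [← Polynomial.leadingCoeff_mul, ← map_mul, ← hgh, hlead]
    rcases hT.isUnit_or_isUnit hlm.symm with hu' | hu'
    · exact Or.inl (isUnit_of_isUnit_leadingCoeff_Φ hu hv hgne hu')
    · exact Or.inr (isUnit_of_isUnit_leadingCoeff_Φ hu hv hhne hu')

theorem exists_sr {m n : ℕ} (hm : 0 < m) (hn : 0 < n) (hco : Nat.Coprime m n) :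
    ∃ s r : ℕ, m * s = n * r + 1 := by
  have htot : 0 < n.totient := Nat.totient_pos.mpr hn
  refine ⟨m ^ (n.totient - 1), ?_⟩
  have hme : m ^ n.totient ≡ 1 [MOD n] := Nat.ModEq.pow_totient hco
  have hpow : m * m ^ (n.totient - 1) = m ^ n.totient := by
    rw [← pow_succ']
    congr 1
    omega
  have h1 : 1 ≤ m ^ n.totient := Nat.one_le_pow _ _ hm
  have hdvd : n ∣ m ^ n.totient - 1 := (Nat.modEq_iff_dvd' h1).mp hme.symm
  obtain ⟨r, hr⟩ := hdvd
  exact ⟨r, by omega⟩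

theorem uniq {m n : ℕ} (hco : Nat.Coprime m n) (hm : 0 < m) {i j i' j' : ℕ}
    (hi : i < m) (hi' : i' < m) (h : n * i + m * j = n * i' + m * j') :
    i = i' ∧ j = j' := by
  have h1 : n * i ≡ n * i' [MOD m] := by
    have e1 := Nat.add_mul_mod_self_left (n * i) m j
    have e2 := Nat.add_mul_mod_self_left (n * i') m j'
    unfold Nat.ModEq
    rw [← e1, ← e2, h]
  have h2 : i ≡ i' [MOD m] :=
    Nat.ModEq.cancel_left_of_coprime (Nat.Coprime.gcd_eq_one hco) h1
  have hii : i = i' := by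
    unfold Nat.ModEq at h2
    rwa [Nat.mod_eq_of_lt hi, Nat.mod_eq_of_lt hi'] at h2
  subst hii
  refine ⟨rfl, Nat.eq_of_mul_eq_mul_left hm (by omega)⟩

/-- The "monomial curve" substitution `x ↦ c^s t^n, y ↦ c^r t^m`. -/
noncomputable def ψmap (c : K) (s r m n : ℕ) : MvPolynomial (Fin 2) K →+* Polynomial K :=
  Ψ (RingHom.id K) ![c ^ s, c ^ r] ![n, m]

theorem ψmap_monomial (c : K) (s r m n : ℕ) (d : Fin 2 →₀ ℕ) (e : K) :
    ψmap c s r m n (MvPolynomial.monomial d e)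
      = Polynomial.monomial (n * d 0 + m * d 1) (e * c ^ (s * d 0 + r * d 1)) := by
  rw [ψmap, Ψ_monomial]
  simp only [Matrix.cons_val_zero, Matrix.cons_val_one, Matrix.head_cons, RingHom.id_apply,
    ← pow_mul, ← pow_add]

theorem ψmap_single0 (c : K) (s r m n : ℕ) (k : ℕ) (e : K) :
    ψmap c s r m n (MvPolynomial.monomial (Finsupp.single 0 k) e)
      = Polynomial.monomial (n * k) (e * c ^ (s * k)) := by
  rw [ψmap_monomial]
  rw [Finsupp.single_eq_same, Finsupp.single_eq_of_ne' (show (0 : Fin 2) ≠ 1 by decide)]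
  simp

theorem ψmap_single1 (c : K) (s r m n : ℕ) (k : ℕ) (e : K) :
    ψmap c s r m n (MvPolynomial.monomial (Finsupp.single 1 k) e)
      = Polynomial.monomial (m * k) (e * c ^ (r * k)) := by
  rw [ψmap_monomial]
  rw [Finsupp.single_eq_same, Finsupp.single_eq_of_ne' (show (1 : Fin 2) ≠ 0 by decide)]
  simp

theorem ψmap_T (a b : K) (ha : a ≠ 0) {m n s r : ℕ} (hms : m * s = n * r + 1) :
    ψmap (-(b * a⁻¹)) s r m n
      (MvPolynomial.monomial (Finsupp.single 0 m) a
        + MvPolynomial.monomial (Finsupp.single 1 n) b) = 0 := by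
  set c : K := -(b * a⁻¹) with hc
  rw [map_add, ψmap_single0, ψmap_single1, show m * n = n * m from Nat.mul_comm m n,
    ← (Polynomial.monomial (n * m)).map_add]
  have hval : a * c ^ (s * m) + b * c ^ (r * n) = 0 := by
    have hsm : s * m = n * r + 1 := by rw [Nat.mul_comm]; exact hms
    have hrn : r * n = n * r := Nat.mul_comm r n
    rw [hsm, hrn, pow_succ]
    have hac : a * c = -b := by
      rw [hc]
      field_simp
    calc a * (c ^ (n * r) * c) + b * c ^ (n * r)
        = (a * c) * c ^ (n * r) + b * c ^ (n * r) := by ring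
      _ = (-b) * c ^ (n * r) + b * c ^ (n * r) := by rw [hac]
      _ = 0 := by ring
  rw [hval, Polynomial.monomial_zero_right]

theorem ψmap_inj {c : K} (hc : c ≠ 0) (s r : ℕ) {m n : ℕ} (hco : Nat.Coprime m n) (hm : 0 < m)
    {ρ : MvPolynomial (Fin 2) K} (hρ : ρ ≠ 0) (hsupp : ∀ d ∈ ρ.support, d 0 < m) :
    ψmap c s r m n ρ ≠ 0 := by
  obtain ⟨d₀, hd₀⟩ := MvPolynomial.support_nonempty.mpr hρ
  intro h0
  have hc0 : (ψmap c s r m n ρ).coeff (n * d₀ 0 + m * d₀ 1) = 0 := by rw [h0]; simp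
  rw [ψmap, Ψ_coeff] at hc0
  simp only [Matrix.cons_val_zero, Matrix.cons_val_one, Matrix.head_cons,
    RingHom.id_apply] at hc0
  have heq : ∀ d ∈ ρ.support,
      (if n * d 0 + m * d 1 = n * d₀ 0 + m * d₀ 1
        then MvPolynomial.coeff d ρ * ((c ^ s) ^ d 0 * (c ^ r) ^ d 1) else 0)
      = if d = d₀ then MvPolynomial.coeff d₀ ρ * ((c ^ s) ^ d₀ 0 * (c ^ r) ^ d₀ 1) else 0 := by
    intro d hd
    by_cases hdd : d = d₀
    · subst hdd; simp
    · rw [if_neg hdd, if_neg]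
      intro hW
      obtain ⟨h1, h2⟩ := uniq hco hm (hsupp d hd) (hsupp d₀ hd₀) hW
      apply hdd
      ext i
      fin_cases i
      · exact h1
      · exact h2
  replace hc0 : (∑ d ∈ ρ.support, if d = d₀ then
      MvPolynomial.coeff d₀ ρ * ((c ^ s) ^ d₀ 0 * (c ^ r) ^ d₀ 1) else 0) = 0 := by
    exact (Finset.sum_congr rfl heq).symm.trans hc0
  rw [Finset.sum_ite_eq' ρ.support d₀, if_pos hd₀] at hc0
  exact (mul_ne_zero (MvPolynomial.mem_support_iff.mp hd₀)
    (mul_ne_zero (pow_ne_zero _ (pow_ne_zero _ hc)) (pow_ne_zero _ (pow_ne_zero _ hc)))) hc0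

theorem T_irreducible {a b : K} (ha : a ≠ 0) (hb : b ≠ 0) {m n : ℕ} (hm : 0 < m) (hn : 0 < n)
    (hco : Nat.Coprime m n) :
    Irreducible (MvPolynomial.monomial (Finsupp.single 0 m) a
      + MvPolynomial.monomial (Finsupp.single 1 n) b : MvPolynomial (Fin 2) K) := by
  obtain ⟨s, r, hms⟩ := exists_sr hm hn hco
  set c : K := -(b * a⁻¹) with hc
  have hcne : c ≠ 0 := by
    rw [hc, neg_ne_zero]
    exact mul_ne_zero hb (inv_ne_zero ha)
  set T : MvPolynomial (Fin 2) K :=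
    MvPolynomial.monomial (Finsupp.single 0 m) a
      + MvPolynomial.monomial (Finsupp.single 1 n) b with hT
  have hψT : ψmap c s r m n T = 0 := ψmap_T a b ha hms
  set E := MvPolynomial.finSuccEquiv K 1 with hE
  set M : Polynomial (MvPolynomial (Fin 1) K) :=
    Polynomial.X ^ m + Polynomial.C (MvPolynomial.C (a⁻¹ * b) * MvPolynomial.X 0 ^ n) with hM
  have hMmonic : M.Monic := Polynomial.monic_X_pow_add_C _ hm.ne'
  have hMdeg : M.natDegree = m := Polynomial.natDegree_X_pow_add_C
  have hEC : ∀ x : K, E (MvPolynomial.C x) = Polynomial.C (MvPolynomial.C x) := fun x => by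
    rw [← MvPolynomial.algebraMap_eq, AlgEquiv.commutes, Polynomial.algebraMap_apply,
      MvPolynomial.algebraMap_eq]
  have hET : E (MvPolynomial.C a⁻¹ * T) = M := by
    rw [hT, mul_add, ← MvPolynomial.C_mul_X_pow_eq_monomial, ← MvPolynomial.C_mul_X_pow_eq_monomial,
      map_add, map_mul, map_mul, map_mul, map_mul, map_pow, map_pow, hEC, hEC, hEC,
      MvPolynomial.finSuccEquiv_X_zero,
      show (1 : Fin 2) = Fin.succ 0 from (Fin.succ_zero_eq_one).symm,
      MvPolynomial.finSuccEquiv_X_succ]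
    rw [hM, ← mul_assoc, ← Polynomial.C_mul, ← map_mul, inv_mul_cancel₀ ha, MvPolynomial.C_1,
      Polynomial.C_1, one_mul, ← mul_assoc, ← map_mul, ← Polynomial.C_pow, ← Polynomial.C_mul,
      ← map_mul]
  -- kernel of ψmap is contained in (T)
  have hker : ∀ p : MvPolynomial (Fin 2) K, ψmap c s r m n p = 0 → T ∣ p := by
    intro p hp
    have hdiv := Polynomial.modByMonic_add_div (E p) M
    have hp_eq : p = E.symm (E p %ₘ M) + (MvPolynomial.C a⁻¹ * T) * E.symm (E p /ₘ M) := by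
      apply E.injective
      rw [map_add, map_mul, hET, AlgEquiv.apply_symm_apply, AlgEquiv.apply_symm_apply]
      exact hdiv.symm
    set ρ := E.symm (E p %ₘ M) with hρdef
    have hψρ : ψmap c s r m n ρ = 0 := by
      have := congrArg (ψmap c s r m n) hp_eq
      rw [hp, map_add, map_mul, map_mul, hψT, mul_zero, zero_mul, add_zero] at this
      exact this.symm
    by_cases hρ0 : ρ = 0
    · refine ⟨MvPolynomial.C a⁻¹ * E.symm (E p /ₘ M), ?_⟩
      conv_lhs => rw [hp_eq, hρ0, zero_add]
      ring
    · exfalso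
      refine ψmap_inj hcne s r hco hm hρ0 ?_ hψρ
      intro d hd
      by_contra hlt
      push_neg at hlt
      have hcc := MvPolynomial.finSuccEquiv_coeff_coeff (Finsupp.tail d) ρ (d 0)
      rw [Finsupp.cons_tail] at hcc
      have hEρ : E ρ = E p %ₘ M := AlgEquiv.apply_symm_apply E _
      have hcoeff0 : (E p %ₘ M).coeff (d 0) = 0 := by
        by_cases hrem : E p %ₘ M = 0
        · rw [hrem, Polynomial.coeff_zero]
        · apply Polynomial.coeff_eq_zero_of_natDegree_lt
          have hdm := Polynomial.natDegree_lt_natDegree hrem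
            (Polynomial.degree_modByMonic_lt (E p) hMmonic)
          omega
      rw [hEρ, hcoeff0] at hcc
      simp only [MvPolynomial.coeff_zero] at hcc
      exact (MvPolynomial.mem_support_iff.mp hd) hcc.symm
  have hTne : T ≠ 0 := by
    intro h
    have hco' : MvPolynomial.coeff (Finsupp.single 0 m) T = a := by
      rw [hT, MvPolynomial.coeff_add, MvPolynomial.coeff_monomial, MvPolynomial.coeff_monomial,
        if_pos rfl, if_neg, add_zero]
      intro hcon
      rcases (Finsupp.single_eq_single_iff _ _ _ _).mp hcon with ⟨h1, _⟩ | ⟨h1, _⟩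
      · exact absurd h1 (by decide)
      · omega
    rw [h, MvPolynomial.coeff_zero] at hco'
    exact ha hco'.symm
  have hprime : Prime T := by
    refine ⟨hTne, ?_, ?_⟩
    · intro hun
      obtain ⟨g, hg⟩ := hun.exists_right_inv
      have h1 := congrArg (ψmap c s r m n) hg
      rw [map_mul, hψT, zero_mul, map_one] at h1
      exact zero_ne_one h1
    · intro p q hdvd
      obtain ⟨k, hk⟩ := hdvd
      have h0 : ψmap c s r m n p * ψmap c s r m n q = 0 := by
        rw [← map_mul, hk, map_mul, hψT, zero_mul]
      rcases mul_eq_zero.mp h0 with h' | h'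
      · exact Or.inl (hker p h')
      · exact Or.inr (hker q h')
  exact hprime.irreducible

end SumCoprimeAux

/-- If `u` and `v` are nonconstant one-variable polynomials over a field `K` with
coprime degrees, then `u(x) + v(y)` is irreducible in `K[x,y]`. -/
theorem sum_of_coprime_degree_irreducible (K : Type*) [Field K]
    (u v : Polynomial K) (hu : 0 < u.natDegree) (hv : 0 < v.natDegree)
    (hco : Nat.Coprime u.natDegree v.natDegree) :
    Irreducible (Polynomial.aeval (MvPolynomial.X (0 : Fin 2) : MvPolynomial (Fin 2) K) u
      + Polynomial.aeval (MvPolynomial.X (1 : Fin 2) : MvPolynomial (Fin 2) K) v) := by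
  apply SumCoprimeAux.main_reduction u v hu hv
  exact SumCoprimeAux.T_irreducible
    (Polynomial.leadingCoeff_ne_zero.mpr (Polynomial.ne_zero_of_natDegree_gt hu))
    (Polynomial.leadingCoeff_ne_zero.mpr (Polynomial.ne_zero_of_natDegree_gt hv))
    hu hv hco
end

section
/- Let p(x,y) ∈ ℂ[x,y] be a polynomial such that some ℂ-algebra automorphism of ℂ[x,y] maps p to x^k − y^l with gcd(k,l) = 1 and k,l ≥ 2. Then max(k, l) ≤ deg p. -/
open MvPolynomial

section CanonicalModelAux

open Polynomial


open Polynomial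

/-- If `g ≠ 0` and `a` is nonconstant then `g.comp a ≠ 0`. -/
lemma comp_ne_zero_aux {a g : Polynomial ℂ} (ha : 1 ≤ a.natDegree) (hg : g ≠ 0) :
    g.comp a ≠ 0 := by
  intro h
  rcases (Polynomial.comp_eq_zero_iff).1 h with h' | ⟨_, h2⟩
  · exact hg h'
  · rw [h2] at ha; simp [Polynomial.natDegree_C] at ha

lemma aeval_poly_eq_comp (a g : Polynomial ℂ) : Polynomial.aeval a g = g.comp a := by
  rw [Polynomial.aeval_def, Polynomial.comp, Polynomial.algebraMap_eq]

/-- Core elementary lemma: a nonzero `G ∈ (ℂ[u])[Y]` with `G(a, T) = 0` (substituting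
`u ↦ a(T)`, `Y ↦ T`) has `deg_Y G ≥ deg a`. -/
lemma core_deg_le (a : Polynomial ℂ) (ha : 1 ≤ a.natDegree)
    (G : Polynomial (Polynomial ℂ)) (hG : G ≠ 0)
    (hrel : Polynomial.eval₂ (Polynomial.aeval a).toRingHom Polynomial.X G = 0) :
    a.natDegree ≤ G.natDegree := by
  by_contra hlt
  push_neg at hlt
  set α := a.natDegree with hα
  -- the terms
  have hsum : (∑ j ∈ G.support, ((G.coeff j).comp a) * Polynomial.X ^ j) = 0 := by
    rw [Polynomial.eval₂_eq_sum, Polynomial.sum_def] at hrel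
    simpa [aeval_poly_eq_comp] using hrel
  have hsupp_ne : G.support.Nonempty := by
    rwa [Finset.nonempty_iff_ne_empty, Ne, Polynomial.support_eq_empty]
  -- degree function
  set f : ℕ → ℕ := fun j => (G.coeff j).natDegree * α + j with hf
  obtain ⟨j₀, hj₀s, hj₀max⟩ := Finset.exists_max_image G.support f hsupp_ne
  have hdegterm : ∀ j ∈ G.support, (((G.coeff j).comp a) * Polynomial.X ^ j).natDegree = f j := by
    intro j hj
    have hcj : G.coeff j ≠ 0 := Polynomial.mem_support_iff.1 hj
    have hc : (G.coeff j).comp a ≠ 0 := comp_ne_zero_aux ha hcj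
    rw [Polynomial.natDegree_mul hc (pow_ne_zero _ Polynomial.X_ne_zero),
      Polynomial.natDegree_comp, Polynomial.natDegree_X_pow]
  have hjlt : ∀ j ∈ G.support, j < α := fun j hj =>
    lt_of_le_of_lt (Polynomial.le_natDegree_of_mem_supp j hj) hlt
  have hinj : ∀ j ∈ G.support, f j = f j₀ → j = j₀ := by
    intro j hj hfj
    have h1 : f j % α = j := by
      rw [hf]; simp only []
      rw [Nat.mul_add_mod']  -- ((a*b)+c) % b = c % b? check
      exact Nat.mod_eq_of_lt (hjlt j hj)
    have h2 : f j₀ % α = j₀ := by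
      rw [hf]; simp only []
      rw [Nat.mul_add_mod']
      exact Nat.mod_eq_of_lt (hjlt j₀ hj₀s)
    rw [← h1, hfj, h2]
  -- coefficient at f j₀ of the sum
  have hco := congrArg (fun q => Polynomial.coeff q (f j₀)) hsum
  simp only [Polynomial.finset_sum_coeff, Polynomial.coeff_zero] at hco
  rw [Finset.sum_eq_single j₀] at hco
  · have : (((G.coeff j₀).comp a) * Polynomial.X ^ j₀).natDegree = f j₀ := hdegterm j₀ hj₀s
    rw [← this, Polynomial.coeff_natDegree] at hco
    exact (mul_ne_zero (comp_ne_zero_aux ha (Polynomial.mem_support_iff.1 hj₀s))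
      (pow_ne_zero _ Polynomial.X_ne_zero)) (Polynomial.leadingCoeff_eq_zero.1 hco)
  · intro j hj hne
    apply Polynomial.coeff_eq_zero_of_natDegree_lt
    rw [hdegterm j hj]
    exact lt_of_le_of_ne (hj₀max j hj) (fun h => hne (hinj j hj h))
  · intro h; exact absurd hj₀s h



/-- Polynomials (one variable) whose support lies in an additive submonoid `M ⊆ ℕ`
form a subalgebra. -/
noncomputable def suppAlg (M : AddSubmonoid ℕ) : Subalgebra ℂ (Polynomial ℂ) where
  carrier := {f | ∀ n ∈ f.support, n ∈ M}
  mul_mem' := by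
    intro f g hf hg n hn
    rw [Set.mem_setOf_eq] at hf hg
    rw [Polynomial.mem_support_iff, Polynomial.coeff_mul] at hn
    obtain ⟨⟨i, j⟩, hij, hne⟩ := Finset.exists_ne_zero_of_sum_ne_zero hn
    rw [Finset.HasAntidiagonal.mem_antidiagonal] at hij
    rw [← hij]
    exact M.add_mem
      (hf i (Polynomial.mem_support_iff.2 fun h => hne (by rw [h, zero_mul])))
      (hg j (Polynomial.mem_support_iff.2 fun h => hne (by rw [h, mul_zero])))
  add_mem' := by
    intro f g hf hg n hn
    rcases Finset.mem_union.1 (Polynomial.support_add hn) with h | h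
    exacts [hf n h, hg n h]
  algebraMap_mem' := by
    intro c n hn
    have := Polynomial.support_C_subset c hn
    rw [Finset.mem_singleton] at this
    rw [this]; exact M.zero_mem

/-- Part A: if `ℂ[a,b] = ℂ[T^k, T^l]` with `k ≥ 2` coprime-ish (`k ∤ l`),
then `l ≤ max (deg a) (deg b)`. -/
lemma partA {k l : ℕ} (hk : 0 < k) (hkl : ¬ k ∣ l) (a b : Polynomial ℂ)
    (hadj : Algebra.adjoin ℂ {a, b} =
      Algebra.adjoin ℂ {(Polynomial.X : Polynomial ℂ) ^ k, (Polynomial.X : Polynomial ℂ) ^ l}) :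
    l ≤ max a.natDegree b.natDegree := by
  by_contra hc
  push_neg at hc
  obtain ⟨hal, hbl⟩ : a.natDegree < l ∧ b.natDegree < l := ⟨(max_lt_iff.1 hc).1, (max_lt_iff.1 hc).2⟩
  -- supports of a, b lie in closure {k, l}
  have hgen : {(Polynomial.X : Polynomial ℂ) ^ k, (Polynomial.X : Polynomial ℂ) ^ l} ⊆
      (suppAlg (AddSubmonoid.closure {k, l}) : Set (Polynomial ℂ)) := by
    rintro f (rfl | rfl)
    · intro n hn
      rw [Polynomial.support_X_pow (R := ℂ), Finset.mem_singleton] at hn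
      rw [hn]
      exact AddSubmonoid.subset_closure (Set.mem_insert _ _)
    · intro n hn
      rw [Polynomial.support_X_pow (R := ℂ), Finset.mem_singleton] at hn
      rw [hn]
      exact AddSubmonoid.subset_closure (Set.mem_insert_iff.2 (Or.inr rfl))
  have hle : Algebra.adjoin ℂ {a, b} ≤ suppAlg (AddSubmonoid.closure {k, l}) := by
    rw [hadj]; exact Algebra.adjoin_le hgen
  have hsupp : ∀ f ∈ ({a, b} : Set (Polynomial ℂ)), ∀ n ∈ f.support, k ∣ n := by
    intro f hf n hn
    have hfd : f.natDegree < l := by rcases hf with rfl | rfl; exacts [hal, hbl]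
    have hnM : n ∈ AddSubmonoid.closure ({k, l} : Set ℕ) :=
      hle (Algebra.subset_adjoin hf) n hn
    obtain ⟨i, j, hij⟩ := (AddSubmonoid.mem_closure_pair k l n).1 hnM
    simp only [smul_eq_mul] at hij
    have hnl : n < l := lt_of_le_of_lt (Polynomial.le_natDegree_of_mem_supp n hn) hfd
    have hj0 : j = 0 := by
      by_contra hj
      have : l ≤ n := by
        rw [← hij]
        calc l ≤ j * l := Nat.le_mul_of_pos_left l (Nat.pos_of_ne_zero hj)
        _ ≤ i * k + j * l := Nat.le_add_left _ _
      omega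
    rw [hj0] at hij
    simp only [zero_mul, add_zero] at hij
    exact ⟨i, by rw [← hij, mul_comm]⟩
  -- hence ℂ[a,b] ⊆ polynomials supported on multiples of k
  have hle2 : Algebra.adjoin ℂ {a, b} ≤ suppAlg (AddSubmonoid.closure {k}) := by
    apply Algebra.adjoin_le
    intro f hf n hn
    obtain ⟨m, hm⟩ := hsupp f hf n hn
    exact AddSubmonoid.mem_closure_singleton.2 ⟨m, by rw [smul_eq_mul, hm, mul_comm]⟩
  have hXl : (Polynomial.X : Polynomial ℂ) ^ l ∈ Algebra.adjoin ℂ {a, b} := by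
    rw [hadj]
    exact Algebra.subset_adjoin (Set.mem_insert_iff.2 (Or.inr rfl))
  have := hle2 hXl l (by
    rw [Polynomial.support_X_pow (R := ℂ)]
    exact Finset.mem_singleton_self l)
  obtain ⟨m, hm⟩ := AddSubmonoid.mem_closure_singleton.1 this
  exact hkl ⟨m, by rw [← hm, smul_eq_mul, mul_comm]⟩
open IntermediateField

noncomputable section

abbrev AuxK : Type := FractionRing (Polynomial ℂ)

set_option maxHeartbeats 1000000 in
/-- Part B: if `p(a,b) = 0`, `p ≠ 0`, and `T` is a ratio of two elements of `ℂ[a,b]`,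
then `deg a ≤ totalDegree p`. -/
lemma partB (p : MvPolynomial (Fin 2) ℂ) (hp : p ≠ 0) (a b : Polynomial ℂ)
    (hab : MvPolynomial.aeval ![a, b] p = 0)
    (n d : Polynomial ℂ) (hn : n ∈ Algebra.adjoin ℂ {a, b})
    (hdmem : d ∈ Algebra.adjoin ℂ {a, b}) (hd0 : d ≠ 0)
    (htd : Polynomial.X * d = n) :
    a.natDegree ≤ p.totalDegree := by
  rcases Nat.eq_zero_or_pos a.natDegree with h0 | ha
  · rw [h0]; exact Nat.zero_le _
  -- setup
  set ι : Polynomial ℂ →+* AuxK := algebraMap (Polynomial ℂ) AuxK with hι_def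
  have hι : Function.Injective ι := IsFractionRing.injective (Polynomial ℂ) AuxK
  set ιA : Polynomial ℂ →ₐ[ℂ] AuxK := IsScalarTower.toAlgHom ℂ (Polynomial ℂ) AuxK with hιA_def
  have hιA_apply : ∀ x, ιA x = ι x := fun x => rfl
  set a' : AuxK := ι a with ha'_def
  set b' : AuxK := ι b with hb'_def
  set t' : AuxK := ι Polynomial.X with ht'_def
  -- the coefficient map ℂ[u] → K, u ↦ a'
  have haeval_a' : ((Polynomial.aeval a' : Polynomial ℂ →ₐ[ℂ] AuxK) : Polynomial ℂ →+* AuxK)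
      = ι.comp (Polynomial.aeval a : Polynomial ℂ →ₐ[ℂ] (Polynomial ℂ)).toRingHom := by
    apply Polynomial.ringHom_ext
    · intro c
      simp only [Polynomial.aeval_C, RingHom.comp_apply, AlgHom.toRingHom_eq_coe,
        RingHom.coe_coe, Polynomial.aeval_C]
      rw [hι_def, IsScalarTower.algebraMap_apply ℂ (Polynomial ℂ) AuxK, Polynomial.algebraMap_eq]
    · simp [ha'_def]
  -- Θ : collapse MvPolynomial (Fin 2) into (ℂ[u])[Y], X0 ↦ C u, X1 ↦ Y
  set Θ : MvPolynomial (Fin 2) ℂ →ₐ[ℂ] Polynomial (Polynomial ℂ) :=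
    MvPolynomial.aeval ![Polynomial.C Polynomial.X, Polynomial.X] with hΘ_def
  set P : Polynomial (Polynomial ℂ) := Θ p with hP_def
  -- Θ has a left inverse, hence P ≠ 0
  have hP0 : P ≠ 0 := by
    intro h
    apply hp
    set Ξ : Polynomial (Polynomial ℂ) →ₐ[ℂ] MvPolynomial (Fin 2) ℂ :=
      Polynomial.aevalTower (Polynomial.aeval (MvPolynomial.X 0)) (MvPolynomial.X 1) with hΞ
    have : Ξ.comp Θ = AlgHom.id ℂ _ := by
      apply MvPolynomial.algHom_ext
      intro i
      fin_cases i <;> simp [hΞ, hΘ_def]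
    calc p = Ξ (Θ p) := by rw [← AlgHom.comp_apply, this]; rfl
    _ = Ξ P := rfl
    _ = 0 := by rw [h, map_zero]
  have hPdeg : P.natDegree ≤ p.totalDegree := by
    have hPsum : Θ p = ∑ v ∈ p.support, Θ (MvPolynomial.monomial v (MvPolynomial.coeff v p)) := by
      conv_lhs => rw [MvPolynomial.as_sum p]
      exact map_sum Θ _ _
    rw [hP_def, hPsum]
    apply Polynomial.natDegree_sum_le_of_forall_le
    intro v hv
    have h1 : Θ (MvPolynomial.monomial v (MvPolynomial.coeff v p)) =
        algebraMap ℂ _ (MvPolynomial.coeff v p) *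
          (Polynomial.C Polynomial.X ^ (v 0) * Polynomial.X ^ (v 1)) := by
      rw [hΘ_def, MvPolynomial.aeval_monomial]
      congr 1
      rw [Finsupp.prod_fintype _ _ (fun i => pow_zero _)]
      rw [Fin.prod_univ_two]
      simp
    rw [h1]
    have h2 : (algebraMap ℂ (Polynomial (Polynomial ℂ)) (MvPolynomial.coeff v p) *
        (Polynomial.C Polynomial.X ^ (v 0) * Polynomial.X ^ (v 1))).natDegree ≤ 0 + (0 + v 1) := by
      apply le_trans (Polynomial.natDegree_mul_le)
      gcongr
      · rw [Polynomial.algebraMap_apply]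
        exact le_of_eq (Polynomial.natDegree_C _)
      · apply le_trans (Polynomial.natDegree_mul_le)
        gcongr
        · rw [← map_pow]
          exact le_of_eq (Polynomial.natDegree_C _)
        · exact le_of_eq (Polynomial.natDegree_X_pow _)
    refine le_trans h2 ?_
    simp only [zero_add]
    refine le_trans ?_ (MvPolynomial.le_totalDegree hv)
    rw [Finsupp.sum_fintype _ _ (fun i => rfl), Fin.sum_univ_two]
    omega
  -- F₀ = ℂ(a')
  set F₀ : IntermediateField ℂ AuxK := ℂ⟮a'⟯ with hF₀
  set ag : F₀ := IntermediateField.AdjoinSimple.gen ℂ a' with hag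
  set θ : Polynomial ℂ →ₐ[ℂ] F₀ := Polynomial.aeval ag with hθ
  have hθcoe : ∀ g : Polynomial ℂ, (algebraMap F₀ AuxK) (θ g) = Polynomial.aeval a' g := by
    intro g
    rw [hθ, ← Polynomial.aeval_algebraMap_apply, IntermediateField.AdjoinSimple.algebraMap_gen]
  -- Q = P with coefficients pushed into F₀
  set Q : Polynomial F₀ := P.map θ.toRingHom with hQ_def
  have haeq : ∀ g : Polynomial ℂ, Polynomial.aeval a' g = ι (Polynomial.aeval a g) := by
    intro g
    have := congrArg (fun f => f g) haeval_a'
    simpa using this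
  have hθinj : Function.Injective θ.toRingHom := by
    intro g₁ g₂ h
    have h' : θ g₁ = θ g₂ := h
    have h2 : Polynomial.aeval a' g₁ = Polynomial.aeval a' g₂ := by
      rw [← hθcoe, ← hθcoe, h']
    rw [haeq, haeq] at h2
    have h3 : Polynomial.aeval a g₁ = Polynomial.aeval a g₂ := hι h2
    -- injectivity of aeval a
    by_contra hne
    have h4 : g₁ - g₂ ≠ 0 := sub_ne_zero.2 hne
    have h5 : Polynomial.aeval a (g₁ - g₂) = 0 := by rw [map_sub, h3, sub_self]
    have h6 : (g₁ - g₂).comp a = 0 := by rw [← aeval_poly_eq_comp]; exact h5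
    exact comp_ne_zero_aux ha h4 h6
  have hQ0 : Q ≠ 0 := (Polynomial.map_ne_zero_iff hθinj).2 hP0
  have hQdeg : Q.natDegree ≤ P.natDegree := Polynomial.natDegree_map_le
  -- Q(b') = 0
  have hQb : Polynomial.aeval b' Q = 0 := by
    have e1 : Polynomial.aeval b' Q =
        Polynomial.eval₂ ((Polynomial.aeval a' : Polynomial ℂ →ₐ[ℂ] AuxK) :
          Polynomial ℂ →+* AuxK) b' P := by
      rw [hQ_def, Polynomial.aeval_def, Polynomial.eval₂_map]
      congr 1
      refine Polynomial.ringHom_ext (fun c => ?_) ?_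
      · simp only [RingHom.comp_apply]
        exact hθcoe _
      · simp only [RingHom.comp_apply]
        exact hθcoe _
    have e2 : Polynomial.eval₂ ((Polynomial.aeval a' : Polynomial ℂ →ₐ[ℂ] AuxK) :
          Polynomial ℂ →+* AuxK) b' P = ι (MvPolynomial.aeval ![a, b] p) := by
      have hcomp : ∀ q : MvPolynomial (Fin 2) ℂ,
          Polynomial.eval₂ ((Polynomial.aeval a' : Polynomial ℂ →ₐ[ℂ] AuxK) :
            Polynomial ℂ →+* AuxK) b' (Θ q) = ι (MvPolynomial.aeval ![a, b] q) := by
        intro q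
        have hA : (((Polynomial.aeval b' : Polynomial AuxK →ₐ[AuxK] AuxK).restrictScalars ℂ).comp
            ((Polynomial.mapAlgHom (Polynomial.aeval a' : Polynomial ℂ →ₐ[ℂ] AuxK)).comp Θ))
            = ιA.comp (MvPolynomial.aeval ![a, b]) := by
          apply MvPolynomial.algHom_ext
          intro i
          fin_cases i <;>
            simp [hΘ_def, hιA_def, haeq] <;> rfl
        have := congrArg (fun f => f q) hA
        simp only [AlgHom.comp_apply] at this
        rw [hιA_apply] at this
        rw [← this]
        simp only [AlgHom.coe_restrictScalars', Polynomial.coe_mapAlgHom]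
        rw [Polynomial.aeval_def, Polynomial.eval₂_map]
        congr 1
      exact hcomp p
    rw [e1, e2, hab, map_zero]
  -- b' is integral over F₀
  have hbint : IsIntegral F₀ b' := IsAlgebraic.isIntegral ⟨Q, hQ0, hQb⟩
  have hEfd : FiniteDimensional F₀ F₀⟮b'⟯ := IntermediateField.adjoin.finiteDimensional hbint
  -- t' ∈ F₀⟮b'⟯
  have hmemE : ∀ x ∈ Algebra.adjoin ℂ ({a, b} : Set (Polynomial ℂ)),
      ι x ∈ F₀⟮b'⟯ := by
    intro x hx
    have h1 : ι x ∈ Subalgebra.map ιA (Algebra.adjoin ℂ ({a, b} : Set (Polynomial ℂ))) :=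
      ⟨x, hx, rfl⟩
    rw [AlgHom.map_adjoin] at h1
    have h2 : (ιA '' {a, b}) = {a', b'} := by
      rw [Set.image_pair]; rfl
    rw [h2] at h1
    have h3 : Algebra.adjoin ℂ ({a', b'} : Set AuxK) ≤
        (IntermediateField.restrictScalars ℂ F₀⟮b'⟯).toSubalgebra := by
      apply Algebra.adjoin_le
      rintro z (rfl | rfl)
      · -- a' ∈ F₀⟮b'⟯
        show a' ∈ IntermediateField.restrictScalars ℂ F₀⟮b'⟯
        have heq : a' = algebraMap F₀ AuxK ag := (IntermediateField.AdjoinSimple.algebraMap_gen ℂ a').symm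
        rw [IntermediateField.mem_restrictScalars, heq]
        exact IntermediateField.algebraMap_mem _ _
      · show b' ∈ IntermediateField.restrictScalars ℂ F₀⟮b'⟯
        rw [IntermediateField.mem_restrictScalars]
        exact IntermediateField.mem_adjoin_simple_self F₀ b'
    exact h3 h1
  have htmem : t' ∈ F₀⟮b'⟯ := by
    have hn' : ι n ∈ F₀⟮b'⟯ := hmemE n hn
    have hd' : ι d ∈ F₀⟮b'⟯ := hmemE d hdmem
    have hd'0 : ι d ≠ 0 := fun h => hd0 (hι (by rw [h, map_zero]))
    have ht'eq : t' = ι n / ι d := by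
      rw [eq_div_iff hd'0, ← map_mul, htd]
    rw [ht'eq]
    exact IntermediateField.div_mem _ hn' hd'
  have htint : IsIntegral F₀ t' := by
    have h1 : IsIntegral F₀ (⟨t', htmem⟩ : F₀⟮b'⟯) := IsIntegral.of_finite F₀ _
    exact IntermediateField.isIntegral_iff.1 h1
  -- minpoly chain
  set m : Polynomial F₀ := minpoly F₀ t' with hm_def
  have hm0 : m ≠ 0 := minpoly.ne_zero htint
  have hmmonic : m.Monic := minpoly.monic htint
  have hchain : m.natDegree ≤ Q.natDegree := by
    have h1 : Module.finrank F₀ F₀⟮t'⟯ = m.natDegree :=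
      IntermediateField.adjoin.finrank htint
    have h2 : Module.finrank F₀ F₀⟮b'⟯ = (minpoly F₀ b').natDegree :=
      IntermediateField.adjoin.finrank hbint
    have hle : F₀⟮t'⟯ ≤ F₀⟮b'⟯ := IntermediateField.adjoin_simple_le_iff.2 htmem
    have h3 : Module.finrank F₀ F₀⟮t'⟯ ≤ Module.finrank F₀ F₀⟮b'⟯ := by
      apply LinearMap.finrank_le_finrank_of_injective
        (f := (IntermediateField.inclusion hle).toLinearMap)
      intro x y hxy
      have : ((IntermediateField.inclusion hle) x : AuxK) = ((IntermediateField.inclusion hle) y : AuxK) := by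
        exact_mod_cast congrArg (fun z : F₀⟮b'⟯ => (z : AuxK)) hxy
      exact Subtype.ext (by simpa using this)
    have h4 : (minpoly F₀ b').natDegree ≤ Q.natDegree :=
      Polynomial.natDegree_le_natDegree (minpoly.degree_le_of_ne_zero F₀ b' hQ0 hQb)
    omega
  -- clear denominators of the coefficients of m
  have hch : ∀ j : ℕ, ∃ rs : Polynomial ℂ × Polynomial ℂ,
      Polynomial.aeval a' rs.2 ≠ 0 ∧
      (algebraMap F₀ AuxK (m.coeff j)) * Polynomial.aeval a' rs.2 = Polynomial.aeval a' rs.1 := by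
    intro j
    have hmem : (algebraMap F₀ AuxK (m.coeff j)) ∈ (ℂ⟮a'⟯ : IntermediateField ℂ AuxK) := by
      rw [← hF₀]
      exact (m.coeff j).2
    obtain ⟨r, s, hrs⟩ := (IntermediateField.mem_adjoin_simple_iff ℂ _).1 hmem
    by_cases hs : Polynomial.aeval a' s = 0
    · refine ⟨(0, 1), ?_, ?_⟩
      · simp
      · rw [hrs, hs, div_zero]; simp
    · exact ⟨(r, s), hs, by rw [hrs, div_mul_cancel₀ _ hs]⟩
  choose rs hs0 hrseq using hch
  set D : ℕ := m.natDegree with hD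
  set G : Polynomial (Polynomial ℂ) := ∑ j ∈ Finset.range (D + 1),
    Polynomial.C ((rs j).1 * ∏ i ∈ (Finset.range (D + 1)).erase j, (rs i).2) *
      Polynomial.X ^ j with hG_def
  -- G evaluated in AuxK is (∏ s_i(a')) * m(t') = 0
  have hGrel : Polynomial.eval₂ ((Polynomial.aeval a' : Polynomial ℂ →ₐ[ℂ] AuxK) :
      Polynomial ℂ →+* AuxK) t' G = 0 := by
    rw [hG_def, Polynomial.eval₂_finset_sum]
    have hterm : ∀ j ∈ Finset.range (D + 1),
        Polynomial.eval₂ ((Polynomial.aeval a' : Polynomial ℂ →ₐ[ℂ] AuxK) :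
          Polynomial ℂ →+* AuxK) t'
          (Polynomial.C ((rs j).1 * ∏ i ∈ (Finset.range (D + 1)).erase j, (rs i).2) *
            Polynomial.X ^ j)
        = (algebraMap F₀ AuxK (m.coeff j)) *
            (∏ i ∈ Finset.range (D + 1), Polynomial.aeval a' (rs i).2) * t' ^ j := by
      intro j hj
      have hprod : Polynomial.aeval a' (rs j).2 *
          ∏ i ∈ (Finset.range (D + 1)).erase j, Polynomial.aeval a' (rs i).2
          = ∏ i ∈ Finset.range (D + 1), Polynomial.aeval a' (rs i).2 :=
        Finset.mul_prod_erase (Finset.range (D + 1)) (fun i => Polynomial.aeval a' (rs i).2) hj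
      rw [Polynomial.eval₂_mul, Polynomial.eval₂_C, Polynomial.eval₂_X_pow]
      simp only [RingHom.coe_coe]
      rw [map_mul, map_prod, ← hrseq j, ← hprod]
      ring
    rw [Finset.sum_congr rfl hterm]
    have : ∑ j ∈ Finset.range (D + 1),
        (algebraMap F₀ AuxK (m.coeff j)) *
          (∏ i ∈ Finset.range (D + 1), Polynomial.aeval a' (rs i).2) * t' ^ j
        = (∏ i ∈ Finset.range (D + 1), Polynomial.aeval a' (rs i).2) *
          ∑ j ∈ Finset.range (D + 1), (algebraMap F₀ AuxK (m.coeff j)) * t' ^ j := by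
      rw [Finset.mul_sum]
      apply Finset.sum_congr rfl
      intro j hj
      ring
    rw [this]
    have hmin : ∑ j ∈ Finset.range (D + 1), (algebraMap F₀ AuxK (m.coeff j)) * t' ^ j = 0 := by
      have := minpoly.aeval F₀ t'
      rw [← hm_def] at this
      rw [Polynomial.aeval_eq_sum_range] at this
      rw [← hD] at this
      simpa [Algebra.smul_def] using this
    rw [hmin, mul_zero]
  -- G ≠ 0
  have hG0 : G ≠ 0 := by
    intro h
    have hcoeffD : G.coeff D = (rs D).1 * ∏ i ∈ (Finset.range (D + 1)).erase D, (rs i).2 := by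
      rw [hG_def]
      rw [Polynomial.finset_sum_coeff]
      rw [Finset.sum_eq_single D]
      · rw [Polynomial.C_mul_X_pow_eq_monomial, Polynomial.coeff_monomial, if_pos rfl]
      · intro j hj hne
        rw [Polynomial.C_mul_X_pow_eq_monomial, Polynomial.coeff_monomial, if_neg hne]
      · intro hD'
        exact absurd (Finset.self_mem_range_succ D) hD'
    have hval : Polynomial.aeval a' (G.coeff D) =
        (algebraMap F₀ AuxK (m.coeff D)) * ∏ i ∈ Finset.range (D + 1), Polynomial.aeval a' (rs i).2 := by
      have hprod : Polynomial.aeval a' (rs D).2 *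
          ∏ i ∈ (Finset.range (D + 1)).erase D, Polynomial.aeval a' (rs i).2
          = ∏ i ∈ Finset.range (D + 1), Polynomial.aeval a' (rs i).2 :=
        Finset.mul_prod_erase (Finset.range (D + 1)) (fun i => Polynomial.aeval a' (rs i).2) (Finset.self_mem_range_succ D)
      rw [hcoeffD, map_mul, map_prod, ← hrseq D, ← hprod]
      ring
    have hlead : (algebraMap F₀ AuxK (m.coeff D)) = 1 := by
      have : m.coeff D = 1 := hmmonic.coeff_natDegree
      rw [this, map_one]
    have hprodne : (∏ i ∈ Finset.range (D + 1), Polynomial.aeval a' (rs i).2) ≠ 0 :=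
      Finset.prod_ne_zero_iff.2 fun i _ => hs0 i
    rw [h, Polynomial.coeff_zero, map_zero, hlead, one_mul] at hval
    exact hprodne hval.symm
  -- degree of G
  have hGdeg : G.natDegree ≤ D := by
    rw [hG_def]
    apply Polynomial.natDegree_sum_le_of_forall_le
    intro j hj
    refine le_trans (Polynomial.natDegree_mul_le) ?_
    rw [Polynomial.natDegree_C, Polynomial.natDegree_X_pow]
    simpa using Nat.lt_succ_iff.1 (Finset.mem_range.1 hj)
  -- transfer the relation down to ℂ[T]
  have hrelC : Polynomial.eval₂ (Polynomial.aeval a).toRingHom Polynomial.X G = 0 := by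
    apply hι
    rw [map_zero]
    have h2 := Polynomial.hom_eval₂ G (Polynomial.aeval a).toRingHom ι Polynomial.X
    rw [h2, ← haeval_a']
    exact hGrel
  exact le_trans (core_deg_le a ha G hG0 hrelC)
    (le_trans hGdeg (le_trans hchain (le_trans hQdeg hPdeg)))


end

end CanonicalModelAux

/-- Theorem 1.3(a): if some automorphism of `ℂ[x,y]` maps `p` to the canonical model
`x^k - y^l` with `gcd(k,l) = 1` and `k, l ≥ 2`, then `max k l ≤ deg p`. -/
theorem canonical_model_degree_bound (p : MvPolynomial (Fin 2) ℂ) (k l : ℕ)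
    (hk : 2 ≤ k) (hl : 2 ≤ l) (hco : Nat.Coprime k l)
    (σ : MvPolynomial (Fin 2) ℂ ≃ₐ[ℂ] MvPolynomial (Fin 2) ℂ)
    (hσ : σ p = X 0 ^ k - X 1 ^ l) :
    max k l ≤ p.totalDegree := by
  -- p ≠ 0
  have hp : p ≠ 0 := by
    intro h
    rw [h, map_zero] at hσ
    have := congrArg (MvPolynomial.aeval (![1, 0] : Fin 2 → ℂ)) hσ
    rw [map_zero, map_sub, map_pow, map_pow] at this
    simp only [MvPolynomial.aeval_X, Matrix.cons_val_zero, Matrix.cons_val_one, Matrix.head_cons,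
      one_pow, zero_pow (by omega : l ≠ 0), sub_zero] at this
    exact one_ne_zero this.symm
  set ψ : MvPolynomial (Fin 2) ℂ →ₐ[ℂ] Polynomial ℂ :=
    MvPolynomial.aeval ![Polynomial.X ^ l, Polynomial.X ^ k] with hψ
  set a : Polynomial ℂ := ψ (σ (X 0)) with ha_def
  set b : Polynomial ℂ := ψ (σ (X 1)) with hb_def
  have hχ : (ψ.comp σ.toAlgHom : MvPolynomial (Fin 2) ℂ →ₐ[ℂ] Polynomial ℂ)
      = MvPolynomial.aeval ![a, b] := by
    apply MvPolynomial.algHom_ext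
    intro i
    fin_cases i <;> simp [ha_def, hb_def]
  have hab : MvPolynomial.aeval ![a, b] p = 0 := by
    rw [← hχ]
    show ψ (σ p) = 0
    rw [hσ, map_sub, map_pow, map_pow, hψ]
    simp only [MvPolynomial.aeval_X, Matrix.cons_val_zero, Matrix.cons_val_one, Matrix.head_cons]
    rw [← pow_mul, ← pow_mul, mul_comm, sub_self]
  -- ranges
  have hrpair : ∀ x y : Polynomial ℂ, Set.range ![x, y] = {x, y} := by
    intro x y
    ext z
    constructor
    · rintro ⟨i, rfl⟩
      fin_cases i
      · exact Set.mem_insert _ _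
      · exact Set.mem_insert_iff.2 (Or.inr rfl)
    · rintro (rfl | rfl)
      exacts [⟨0, rfl⟩, ⟨1, rfl⟩]
  have h1 : Algebra.adjoin ℂ ({a, b} : Set (Polynomial ℂ))
      = (MvPolynomial.aeval ![a, b] : MvPolynomial (Fin 2) ℂ →ₐ[ℂ] Polynomial ℂ).range := by
    rw [← Algebra.adjoin_range_eq_range_aeval, hrpair]
  have h2 : Algebra.adjoin ℂ ({(Polynomial.X : Polynomial ℂ) ^ l, (Polynomial.X : Polynomial ℂ) ^ k})
      = ψ.range := by
    rw [hψ, ← Algebra.adjoin_range_eq_range_aeval, hrpair]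
  have h3 : (MvPolynomial.aeval ![a, b] : MvPolynomial (Fin 2) ℂ →ₐ[ℂ] Polynomial ℂ).range
      = ψ.range := by
    rw [← hχ]
    ext x
    constructor
    · rintro ⟨q, rfl⟩
      exact ⟨σ q, rfl⟩
    · rintro ⟨q, rfl⟩
      exact ⟨σ.symm q, by simp⟩
  have hadj : Algebra.adjoin ℂ ({a, b} : Set (Polynomial ℂ))
      = Algebra.adjoin ℂ {(Polynomial.X : Polynomial ℂ) ^ l, (Polynomial.X : Polynomial ℂ) ^ k} := by
    rw [h1, h3, h2]
  have hadj' : Algebra.adjoin ℂ ({a, b} : Set (Polynomial ℂ))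
      = Algebra.adjoin ℂ {(Polynomial.X : Polynomial ℂ) ^ k, (Polynomial.X : Polynomial ℂ) ^ l} := by
    rw [hadj, Set.pair_comm]
  -- part A (both orientations)
  have hkl : ¬ k ∣ l := fun hdvd => by
    have := Nat.Coprime.eq_one_of_dvd hco hdvd
    omega
  have hlk : ¬ l ∣ k := fun hdvd => by
    have := Nat.Coprime.eq_one_of_dvd hco.symm hdvd
    omega
  have hAl : l ≤ max a.natDegree b.natDegree := partA (by omega) hkl a b hadj'
  have hAk : k ≤ max a.natDegree b.natDegree := partA (by omega) hlk a b hadj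
  -- Bezout witness
  obtain ⟨m, -, hm⟩ := Nat.exists_mul_mod_eq_one_of_coprime hco (by omega)
  set q : ℕ := k * m / l with hq_def
  have hq : l * q + 1 = k * m := by
    rw [hq_def, ← hm]
    exact Nat.div_add_mod (k * m) l
  set nn : Polynomial ℂ := ((Polynomial.X : Polynomial ℂ) ^ k) ^ m with hnn
  set dd : Polynomial ℂ := ((Polynomial.X : Polynomial ℂ) ^ l) ^ q with hdd
  have hnmem : nn ∈ Algebra.adjoin ℂ ({a, b} : Set (Polynomial ℂ)) := by
    rw [hadj']
    exact pow_mem (Algebra.subset_adjoin (Set.mem_insert _ _)) m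
  have hdmem : dd ∈ Algebra.adjoin ℂ ({a, b} : Set (Polynomial ℂ)) := by
    rw [hadj]
    exact pow_mem (Algebra.subset_adjoin (Set.mem_insert _ _)) q
  have hdd0 : dd ≠ 0 := pow_ne_zero _ (pow_ne_zero _ Polynomial.X_ne_zero)
  have htd : Polynomial.X * dd = nn := by
    rw [hnn, hdd, ← pow_mul, ← pow_mul, ← pow_succ', hq]
  -- part B for a
  have hBa : a.natDegree ≤ p.totalDegree := partB p hp a b hab nn dd hnmem hdmem hdd0 htd
  -- part B for b via swapping
  have hBb : b.natDegree ≤ p.totalDegree := by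
    have hp'0 : MvPolynomial.rename (Equiv.swap (0 : Fin 2) 1) p ≠ 0 := by
      intro h
      apply hp
      have hinj := MvPolynomial.rename_injective (R := ℂ)
        (Equiv.swap (0 : Fin 2) 1) (Equiv.swap (0 : Fin 2) 1).injective
      apply hinj
      rw [h, map_zero]
    have hcompeq : (![b, a] ∘ (Equiv.swap (0 : Fin 2) 1)) = ![a, b] := by
      funext i
      fin_cases i <;> simp
    have hab' : MvPolynomial.aeval ![b, a]
        (MvPolynomial.rename (Equiv.swap (0 : Fin 2) 1) p) = 0 := by
      rw [MvPolynomial.aeval_rename, hcompeq]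
      exact hab
    have hpair : ({b, a} : Set (Polynomial ℂ)) = {a, b} := Set.pair_comm b a
    have hdeg' : (MvPolynomial.rename (Equiv.swap (0 : Fin 2) 1) p).totalDegree ≤ p.totalDegree :=
      MvPolynomial.totalDegree_rename_le _ _
    have := partB (MvPolynomial.rename (Equiv.swap (0 : Fin 2) 1) p) hp'0 b a hab' nn dd
      (by rw [hpair]; exact hnmem) (by rw [hpair]; exact hdmem) hdd0 htd
    omega
  have : max k l ≤ max a.natDegree b.natDegree := max_le hAk hAl
  have hfin : max a.natDegree b.natDegree ≤ p.totalDegree := max_le hBa hBb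
  omega
end

section
/- Let K be a field of characteristic 0 and suppose p = ax^n + by^m + Σ_{im+jn ≤ mn, i,j>0} c_{ij}x^i y^j with a,b ≠ 0, where m does not divide n and n does not divide m. Then p is a coordinate polynomial (i.e., an automorphic image of x) if and only if max(m,n) = 1. -/
open MvPolynomial

private lemma myChainRule {K : Type*} [CommRing K] (s : Fin 2 → MvPolynomial (Fin 2) K)
    (F : MvPolynomial (Fin 2) K) (i : Fin 2) :
    pderiv i (aeval s F) =
      aeval s (pderiv 0 F) * pderiv i (s 0) + aeval s (pderiv 1 F) * pderiv i (s 1) := by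
  have h0 : pderiv (0:Fin 2) (X (1:Fin 2) : MvPolynomial (Fin 2) K) = 0 :=
    pderiv_X_of_ne (by decide)
  have h1 : pderiv (1:Fin 2) (X (0:Fin 2) : MvPolynomial (Fin 2) K) = 0 :=
    pderiv_X_of_ne (by decide)
  induction F using MvPolynomial.induction_on with
  | C a => simp
  | add f g hf hg => simp only [map_add, hf, hg]; ring
  | mul_X f j hf =>
      fin_cases j
      · show pderiv i (aeval s (f * X 0)) = _
        simp only [map_mul, pderiv_mul, hf, aeval_X, Fin.mk_zero, Fin.mk_one, pderiv_X_self,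
          h0, h1, mul_one, mul_zero, add_zero, zero_add, map_add]
        ring
      · show pderiv i (aeval s (f * X 1)) = _
        simp only [map_mul, pderiv_mul, hf, aeval_X, Fin.mk_zero, Fin.mk_one, pderiv_X_self,
          h0, h1, mul_one, mul_zero, add_zero, zero_add, map_add]
        ring

private lemma myConstCoeffPderiv {K : Type*} [CommRing K] (f : MvPolynomial (Fin 2) K)
    (i : Fin 2) (h : coeff (Finsupp.single i 1) f = 0) :
    constantCoeff (pderiv i f) = 0 := by
  rw [constantCoeff_eq]
  conv_lhs => rw [f.as_sum]
  rw [map_sum]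
  rw [MvPolynomial.coeff_sum]
  apply Finset.sum_eq_zero
  intro v hv
  rw [pderiv_monomial, coeff_monomial]
  split_ifs with hv0
  · by_cases hvi : v i = 0
    · simp [hvi]
    · have hle : v ≤ Finsupp.single i 1 := by
        rwa [tsub_eq_zero_iff_le] at hv0
      have hveq : v = Finsupp.single i 1 := by
        refine le_antisymm hle ?_
        rw [Finsupp.le_def]
        intro j
        rcases eq_or_ne j i with rfl | hj
        · simpa [Finsupp.single_apply] using Nat.one_le_iff_ne_zero.mpr hvi
        · simp [Finsupp.single_apply, hj.symm]
      rw [hveq, h, zero_mul]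
  · rfl

/-- Special case of Proposition 1.2: a polynomial
`p = a x^n + b y^m + Σ_{i*m+j*n ≤ m*n, i,j>0} c_ij x^i y^j` with `a, b ≠ 0`, `m ∤ n`
and `n ∤ m` is a coordinate polynomial (an automorphic image of `x`)
if and only if `max m n = 1`. -/
theorem coordinate_iff_max_eq_one (K : Type*) [Field K] [CharZero K] (m n : ℕ)
    (hmn : ¬ m ∣ n) (hnm : ¬ n ∣ m)
    (p : MvPolynomial (Fin 2) K)
    (ha : p.coeff (Finsupp.single (0 : Fin 2) n) ≠ 0)
    (hb : p.coeff (Finsupp.single (1 : Fin 2) m) ≠ 0)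
    (hsupp : ∀ d ∈ p.support, d = Finsupp.single (0 : Fin 2) n ∨
        d = Finsupp.single (1 : Fin 2) m ∨
        (0 < d 0 ∧ 0 < d 1 ∧ d 0 * m + d 1 * n ≤ m * n)) :
    (∃ σ : MvPolynomial (Fin 2) K ≃ₐ[K] MvPolynomial (Fin 2) K, σ (X 0) = p) ↔
      max m n = 1 := by
  have hm1 : m ≠ 1 := fun h => hmn (h ▸ one_dvd n)
  have hn1 : n ≠ 1 := fun h => hnm (h ▸ one_dvd m)
  have hm0 : m ≠ 0 := fun h => hnm (h ▸ dvd_zero n)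
  have hn0 : n ≠ 0 := fun h => hmn (h ▸ dvd_zero m)
  apply iff_of_false _ (by omega)
  rintro ⟨σ, hσ⟩
  -- the coefficients of x and y in p vanish
  have key : ∀ i : Fin 2, coeff (Finsupp.single i 1) p = 0 := by
    intro i
    by_contra hc
    rcases hsupp _ (mem_support_iff.mpr hc) with h | h | h
    · rcases Finsupp.single_eq_single_iff _ _ _ _ |>.mp h with ⟨-, h'⟩ | ⟨h', -⟩
      · exact hn1 h'.symm
      · exact one_ne_zero h'
    · rcases Finsupp.single_eq_single_iff _ _ _ _ |>.mp h with ⟨-, h'⟩ | ⟨h', -⟩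
      · exact hm1 h'.symm
      · exact one_ne_zero h'
    · obtain ⟨h1, h2, -⟩ := h
      fin_cases i <;> simp_all [Finsupp.single_apply]
  set s : Fin 2 → MvPolynomial (Fin 2) K := fun i => σ (X i) with hs
  have hσf : ∀ f, σ f = aeval s f := by
    intro f
    have h := MvPolynomial.aeval_unique (σ : MvPolynomial (Fin 2) K →ₐ[K] MvPolynomial (Fin 2) K)
    calc σ f = (σ : MvPolynomial (Fin 2) K →ₐ[K] MvPolynomial (Fin 2) K) f := rfl
    _ = aeval ((σ : MvPolynomial (Fin 2) K →ₐ[K] MvPolynomial (Fin 2) K) ∘ X) f := by rw [← h]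
    _ = aeval s f := rfl
  have hs0 : s 0 = p := hσ
  set F := σ.symm (X 0) with hFdef
  set G := σ.symm (X 1) with hGdef
  have hF : aeval s F = X 0 := by rw [← hσf]; exact σ.apply_symm_apply _
  have hG : aeval s G = X 1 := by rw [← hσf]; exact σ.apply_symm_apply _
  have hp0 : constantCoeff (pderiv (0:Fin 2) p) = 0 := myConstCoeffPderiv _ _ (key 0)
  have hp1 : constantCoeff (pderiv (1:Fin 2) p) = 0 := myConstCoeffPderiv _ _ (key 1)
  have hx10 : pderiv (1:Fin 2) (X (0:Fin 2) : MvPolynomial (Fin 2) K) = 0 :=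
    pderiv_X_of_ne (by decide)
  -- the three chain-rule equations, evaluated at constant coefficients
  have c1 := congrArg constantCoeff (myChainRule s F 0)
  have c2 := congrArg constantCoeff (myChainRule s F 1)
  have c3 := congrArg constantCoeff (myChainRule s G 1)
  rw [hF, pderiv_X_self] at c1
  rw [hF, hx10] at c2
  rw [hG, pderiv_X_self] at c3
  simp only [map_add, map_mul, map_one, map_zero, hs0, hp0, hp1, mul_zero, zero_add] at c1 c2 c3
  -- c1 : 1 = A1 * q0, c2 : 0 = A1 * q1, c3 : 1 = B1 * q1
  have hA1 : constantCoeff (aeval s (pderiv 1 F)) ≠ 0 :=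
    left_ne_zero_of_mul_eq_one c1.symm
  have hq1 : constantCoeff (pderiv (1:Fin 2) (s 1)) = 0 := by
    rcases mul_eq_zero.mp c2.symm with h | h
    · exact absurd h hA1
    · exact h
  rw [hq1, mul_zero] at c3
  exact one_ne_zero c3
end
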